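/- arXiv:2202.11442 — 2 statements merged into one kernel-verified Lean document; each statement's English description precedes it below -/
import Mathlib

section
/- Let M_q(n) be the standard quantized matrix algebra over K with n ≥ 2 and q ≠ 0. Then the family of ordered monomials {z^α : α ∈ ℕ^{I(n)}} is a K-basis of M_q(n) (the PBW basis); that is, the ordered monomials are K-linearly independent and span M_q(n) as a K-vector space. -/
/-! Common setup: the standard quantized matrix algebra `M_q(n)` of
Faddeev–Reshetikhin–Takhtajan, defined as the quotient of the free
`K`-algebra on the `n²` generators `z_{ij}` by the two-sided ideal
generated by the relations R1–R4. -/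

/-- The generator `z_{ij}` of the free algebra on `Fin n × Fin n`. -/
noncomputable def freeGen (K : Type*) [Field K] (n : ℕ) (i j : Fin n) :
    FreeAlgebra K (Fin n × Fin n) :=
  FreeAlgebra.ι K (i, j)

/-- The defining relations R1–R4 of the standard quantized matrix algebra. -/
inductive QMRel (K : Type*) [Field K] (q : K) (n : ℕ) :
    FreeAlgebra K (Fin n × Fin n) → FreeAlgebra K (Fin n × Fin n) → Prop
  | r1 (i j k : Fin n) (h : j < k) :
      QMRel K q n (freeGen K n i j * freeGen K n i k)
        (q • (freeGen K n i k * freeGen K n i j))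
  | r2 (i j k : Fin n) (h : i < k) :
      QMRel K q n (freeGen K n i j * freeGen K n k j)
        (q • (freeGen K n k j * freeGen K n i j))
  | r3 (i j s t : Fin n) (h1 : i < s) (h2 : t < j) :
      QMRel K q n (freeGen K n i j * freeGen K n s t)
        (freeGen K n s t * freeGen K n i j)
  | r4 (i j s t : Fin n) (h1 : i < s) (h2 : j < t) :
      QMRel K q n (freeGen K n i j * freeGen K n s t)
        (freeGen K n s t * freeGen K n i j +
          (q - q⁻¹) • (freeGen K n i t * freeGen K n s j))

/-- The standard quantized matrix algebra `M_q(n)`: the quotient of the free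
algebra by the two-sided ideal generated by the relations R1–R4. -/
abbrev QuantumMatrix (K : Type*) [Field K] (q : K) (n : ℕ) :=
  RingQuot (QMRel K q n)

/-- The generator `z_{ij}` of `M_q(n)`. -/
noncomputable def Zgen (K : Type*) [Field K] (q : K) (n : ℕ) (i j : Fin n) :
    QuantumMatrix K q n :=
  RingQuot.mkAlgHom K (QMRel K q n) (freeGen K n i j)

/-- The order on the index set `I(n)`: `(k,l) < (i,j)` iff `k < i`, or
`k = i` and `l < j`. -/
def idxLt {n : ℕ} (p r : Fin n × Fin n) : Prop :=
  p.1 < r.1 ∨ (p.1 = r.1 ∧ p.2 < r.2)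

/-- The ordered monomial `z^α`: the product of the `z_{ij}^{α_{ij}}` taken
in decreasing order of the indices `(i,j)`, i.e.
`z_{nn}^{α_{nn}} z_{n,n-1}^{α_{n,n-1}} ⋯ z_{n1}^{α_{n1}} ⋯ z_{11}^{α_{11}}`. -/
noncomputable def zmon (K : Type*) [Field K] (q : K) {n : ℕ}
    (α : Fin n × Fin n → ℕ) : QuantumMatrix K q n :=
  ((List.finRange n).reverse.flatMap fun i =>
    (List.finRange n).reverse.map fun j => Zgen K q n i j ^ α (i, j)).prod

/-- The lexicographic order on exponent vectors: `α ≺ β` iff `α` is smaller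
than `β` at the largest index (w.r.t. the order on `I(n)`) at which they
differ. -/
def expLt {n : ℕ} (α β : Fin n × Fin n → ℕ) : Prop :=
  ∃ p : Fin n × Fin n, α p < β p ∧ ∀ r : Fin n × Fin n, idxLt p r → α r = β r

/-- The indicator exponent vector `ε_{ij}`. -/
def eps {n : ℕ} (i j : Fin n) : Fin n × Fin n → ℕ :=
  fun p => if p = (i, j) then 1 else 0

/-- `γ` is the leading exponent of `f` with respect to the order `lt`,
relative to the PBW basis `b` indexed by exponent vectors:
`γ` occurs with nonzero coefficient in the expansion of `f` and every other
exponent occurring in `f` is `lt`-smaller than `γ`. -/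
def IsLeadExpWrt {K : Type*} [Field K] {q : K} {n : ℕ}
    (lt : (Fin n × Fin n → ℕ) → (Fin n × Fin n → ℕ) → Prop)
    (b : Module.Basis (Fin n × Fin n → ℕ) K (QuantumMatrix K q n))
    (f : QuantumMatrix K q n) (γ : Fin n × Fin n → ℕ) : Prop :=
  b.repr f γ ≠ 0 ∧ ∀ δ, b.repr f δ ≠ 0 → δ = γ ∨ lt δ γ

/-- `γ` is the leading exponent of `f` w.r.t. the lexicographic order. -/
def IsLeadExp {K : Type*} [Field K] {q : K} {n : ℕ}
    (b : Module.Basis (Fin n × Fin n → ℕ) K (QuantumMatrix K q n))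
    (f : QuantumMatrix K q n) (γ : Fin n × Fin n → ℕ) : Prop :=
  IsLeadExpWrt expLt b f γ


noncomputable section

namespace QMPBW

variable {K : Type*} [Field K] {n : ℕ}

/-- numeric key of an index -/
def key (p : Fin n × Fin n) : ℕ := p.1.val * n + p.2.val

lemma key_lt_of_idxLt {p r : Fin n × Fin n} (h : idxLt p r) : key p < key r := by
  rcases h with h | ⟨h1, h2⟩
  · have hp2 : p.2.val < n := p.2.isLt
    have hmul : (p.1.val + 1) * n ≤ r.1.val * n :=
      Nat.mul_le_mul_right n (Nat.succ_le_of_lt h)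
    have hexp : (p.1.val + 1) * n = p.1.val * n + n := Nat.succ_mul _ _
    have hr2 : r.1.val * n ≤ r.1.val * n + r.2.val := Nat.le_add_right _ _
    unfold key; omega
  · have h1' : p.1.val = r.1.val := congrArg Fin.val h1
    have hmul : p.1.val * n = r.1.val * n := by rw [h1']
    have h2' : p.2.val < r.2.val := h2
    unfold key; omega

lemma key_inj {p r : Fin n × Fin n} (h : key p = key r) : p = r := by
  rcases lt_trichotomy p.1 r.1 with h1 | h1 | h1
  · exact absurd h (Nat.ne_of_lt (key_lt_of_idxLt (Or.inl h1)))
  · have h1' : p.1.val = r.1.val := congrArg Fin.val h1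
    have hmul : p.1.val * n = r.1.val * n := by rw [h1']
    unfold key at h
    have h2 : p.2.val = r.2.val := by omega
    exact Prod.ext h1 (Fin.ext h2)
  · exact absurd h.symm (Nat.ne_of_lt (key_lt_of_idxLt (Or.inl h1)))

lemma idxLt_iff_key {p r : Fin n × Fin n} : idxLt p r ↔ key p < key r := by
  constructor
  · exact key_lt_of_idxLt
  · intro h
    rcases lt_trichotomy p.1 r.1 with h1 | h1 | h1
    · exact Or.inl h1
    · rcases lt_trichotomy p.2 r.2 with h2 | h2 | h2
      · exact Or.inr ⟨h1, h2⟩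
      · have : p = r := Prod.ext h1 h2
        subst this; omega
      · exact absurd (key_lt_of_idxLt (Or.inr ⟨h1.symm, h2⟩)) (by omega)
    · exact absurd (key_lt_of_idxLt (Or.inl h1)) (by omega)

lemma idxLt_irrefl (p : Fin n × Fin n) : ¬ idxLt p p := by
  rw [idxLt_iff_key]; omega

lemma idxLt_asymm {p r : Fin n × Fin n} (h : idxLt p r) : ¬ idxLt r p := by
  rw [idxLt_iff_key] at *; omega

lemma idxLt_trans {p r s : Fin n × Fin n} (h1 : idxLt p r) (h2 : idxLt r s) : idxLt p s := by
  rw [idxLt_iff_key] at *; omega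

lemma idxLt_trichotomy (p r : Fin n × Fin n) : idxLt p r ∨ p = r ∨ idxLt r p := by
  rcases lt_trichotomy (key p) (key r) with h | h | h
  · exact Or.inl (idxLt_iff_key.2 h)
  · exact Or.inr (Or.inl (key_inj h))
  · exact Or.inr (Or.inr (idxLt_iff_key.2 h))

/-- weight of a letter -/
def w (p : Fin n × Fin n) : ℕ := 2 ^ key p

lemma w_pos (p : Fin n × Fin n) : 0 < w p := Nat.pow_pos (by norm_num)

lemma w_lt_w {p r : Fin n × Fin n} (h : idxLt p r) : w p < w r :=
  Nat.pow_lt_pow_right (by norm_num) (key_lt_of_idxLt h)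

lemma w_add_w_lt {a b m : Fin n × Fin n} (hab : a ≠ b) (ham : idxLt a m) (hbm : idxLt b m) :
    w a + w b < w m := by
  have ka := key_lt_of_idxLt ham
  have kb := key_lt_of_idxLt hbm
  have hne : key a ≠ key b := fun h => hab (key_inj h)
  unfold w
  rcases Nat.lt_or_ge (key a) (key b) with h | h
  · have h1 : (2:ℕ) ^ key a < 2 ^ key b := Nat.pow_lt_pow_right (by norm_num) h
    have h2 : (2:ℕ) ^ (key b + 1) ≤ 2 ^ key m := Nat.pow_le_pow_right (by norm_num) kb
    have := Nat.pow_succ 2 (key b); omega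
  · have hba : key b < key a := by omega
    have h1 : (2:ℕ) ^ key b < 2 ^ key a := Nat.pow_lt_pow_right (by norm_num) hba
    have h2 : (2:ℕ) ^ (key a + 1) ≤ 2 ^ key m := Nat.pow_le_pow_right (by norm_num) ka
    have := Nat.pow_succ 2 (key a); omega

/-- the indicator of a letter -/
def de (p : Fin n × Fin n) : Fin n × Fin n → ℕ := fun x => if x = p then 1 else 0

lemma de_self (p : Fin n × Fin n) : de p p = 1 := by simp [de]

lemma de_ne {p x : Fin n × Fin n} (h : x ≠ p) : de p x = 0 := by simp [de, h]

lemma add_de_sub_de (p : Fin n × Fin n) (α : Fin n × Fin n → ℕ) :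
    (α + de p) - de p = α := by
  funext x; by_cases h : x = p <;> simp [de, h, Pi.sub_apply]

lemma sub_de_add_de {p : Fin n × Fin n} {α : Fin n × Fin n → ℕ} (h : α p ≠ 0) :
    (α - de p) + de p = α := by
  funext x; by_cases hx : x = p
  · subst hx; simp [de, Pi.sub_apply]; omega
  · simp [de, hx, Pi.sub_apply]

/-- total weight of an exponent vector -/
def Lam0 (α : Fin n × Fin n → ℕ) : ℕ := ∑ p, α p * w p

/-- weight of letter + exponent vector -/
def Lam (p : Fin n × Fin n) (α : Fin n × Fin n → ℕ) : ℕ := w p + Lam0 α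

lemma Lam0_add_de (α : Fin n × Fin n → ℕ) (p : Fin n × Fin n) :
    Lam0 (α + de p) = Lam0 α + w p := by
  unfold Lam0
  rw [Finset.sum_congr rfl (fun x (_ : x ∈ Finset.univ) => by
      show (α + de p) x * w x = α x * w x + de p x * w x
      simp [add_mul]), Finset.sum_add_distrib]
  congr 1
  rw [Finset.sum_eq_single p (fun x _ hx => by simp [de_ne hx]) (by simp)]
  simp [de_self]

lemma Lam0_sub_de {α : Fin n × Fin n → ℕ} {p : Fin n × Fin n} (h : α p ≠ 0) :
    Lam0 (α - de p) + w p = Lam0 α := by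
  conv_rhs => rw [← sub_de_add_de h]
  rw [Lam0_add_de]

/-- `p` bounds all letters of `α` from above -/
def bnd (p : Fin n × Fin n) (α : Fin n × Fin n → ℕ) : Prop :=
  ∀ r, α r ≠ 0 → ¬ idxLt p r

end QMPBW
namespace QMPBW

variable {K : Type*} [Field K] {n : ℕ}

instance (p r : Fin n × Fin n) : Decidable (idxLt p r) :=
  decidable_of_iff (p.1 < r.1 ∨ (p.1 = r.1 ∧ p.2 < r.2)) Iff.rfl

instance (p : Fin n × Fin n) (α : Fin n × Fin n → ℕ) : Decidable (bnd p α) :=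
  decidable_of_iff (∀ r, α r ≠ 0 → ¬ idxLt p r) Iff.rfl

def msupp (α : Fin n × Fin n → ℕ) : Finset (Fin n × Fin n) :=
  Finset.univ.filter (fun p => α p ≠ 0)

lemma mem_msupp {α : Fin n × Fin n → ℕ} {p : Fin n × Fin n} :
    p ∈ msupp α ↔ α p ≠ 0 := by simp [msupp]

lemma msupp_nonempty_of_not_bnd {p : Fin n × Fin n} {α : Fin n × Fin n → ℕ}
    (h : ¬ bnd p α) : (msupp α).Nonempty := by
  rw [bnd] at h
  push_neg at h
  obtain ⟨r, hr, -⟩ := h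
  exact ⟨r, mem_msupp.2 hr⟩

def mx (α : Fin n × Fin n → ℕ) (h : (msupp α).Nonempty) : Fin n × Fin n :=
  (Finset.exists_mem_eq_sup (msupp α) h key).choose

lemma mx_mem (α : Fin n × Fin n → ℕ) (h : (msupp α).Nonempty) :
    α (mx α h) ≠ 0 :=
  mem_msupp.1 (Finset.exists_mem_eq_sup (msupp α) h key).choose_spec.1

lemma key_mx (α : Fin n × Fin n → ℕ) (h : (msupp α).Nonempty) :
    (msupp α).sup key = key (mx α h) :=
  (Finset.exists_mem_eq_sup (msupp α) h key).choose_spec.2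

lemma bnd_mx (α : Fin n × Fin n → ℕ) (h : (msupp α).Nonempty) :
    bnd (mx α h) α := by
  intro r hr hlt
  have h1 : key r ≤ (msupp α).sup key := Finset.le_sup (mem_msupp.2 hr)
  rw [key_mx α h] at h1
  exact absurd (key_lt_of_idxLt hlt) (by omega)

lemma idxLt_mx {p : Fin n × Fin n} {α : Fin n × Fin n → ℕ} (hb : ¬ bnd p α)
    (h : (msupp α).Nonempty) : idxLt p (mx α h) := by
  rw [bnd] at hb; push_neg at hb
  obtain ⟨r, hr, hlt⟩ := hb
  have h1 : key r ≤ (msupp α).sup key := Finset.le_sup (mem_msupp.2 hr)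
  rw [key_mx α h] at h1
  exact idxLt_iff_key.2 (lt_of_lt_of_le (key_lt_of_idxLt hlt) h1)

lemma mx_eq {α : Fin n × Fin n → ℕ} {m : Fin n × Fin n} (hm : α m ≠ 0) (hb : bnd m α)
    (h : (msupp α).Nonempty) : mx α h = m := by
  apply key_inj
  have h1 : key m ≤ (msupp α).sup key := Finset.le_sup (mem_msupp.2 hm)
  rw [key_mx α h] at h1
  have h2 := hb _ (mx_mem α h)
  rw [idxLt_iff_key] at h2
  omega

lemma bnd_sub {x m : Fin n × Fin n} {α : Fin n × Fin n → ℕ} (h : bnd x α) :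
    bnd x (α - de m) := by
  intro r hr
  exact h r (fun h0 => hr (by simp [Pi.sub_apply, h0]))

lemma bnd_add_de {x p : Fin n × Fin n} {α : Fin n × Fin n → ℕ} (h : bnd x α)
    (hp : ¬ idxLt x p) : bnd x (α + de p) := by
  intro r hr
  by_cases hrp : r = p
  · subst hrp; exact fun hh => hp hh
  · exact h r (by simpa [de_ne hrp] using hr)

/-- commutation coefficient for `p < r` -/
def cc (q : K) (p r : Fin n × Fin n) : K := if p.1 = r.1 ∨ p.2 = r.2 then q else 1

/-- straightening (cross-term) coefficient for `p < r` -/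
def dd (q : K) (p r : Fin n × Fin n) : K := if p.1 < r.1 ∧ p.2 < r.2 then q - q⁻¹ else 0

def cr1 (p r : Fin n × Fin n) : Fin n × Fin n := (p.1, r.2)
def cr2 (p r : Fin n × Fin n) : Fin n × Fin n := (r.1, p.2)

lemma dd_cases (q : K) (p r : Fin n × Fin n) :
    dd q p r = 0 ∨ (p.1 < r.1 ∧ p.2 < r.2) := by
  by_cases h : p.1 < r.1 ∧ p.2 < r.2
  · exact Or.inr h
  · exact Or.inl (by simp [dd, h])

lemma cr1_lt {p r : Fin n × Fin n} (h : p.1 < r.1 ∧ p.2 < r.2) : idxLt (cr1 p r) r :=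
  Or.inl h.1

lemma cr2_lt {p r : Fin n × Fin n} (h : p.1 < r.1 ∧ p.2 < r.2) : idxLt (cr2 p r) r :=
  Or.inr ⟨rfl, h.2⟩

lemma cr1_ne_cr2 {p r : Fin n × Fin n} (h : p.1 < r.1 ∧ p.2 < r.2) :
    cr1 p r ≠ cr2 p r := by
  intro hc
  have := congrArg Prod.fst hc
  simp [cr1, cr2] at this
  exact absurd (this ▸ h.1) (lt_irrefl _)

lemma w_cr_lt {p r : Fin n × Fin n} (h : p.1 < r.1 ∧ p.2 < r.2) :
    w (cr1 p r) + w (cr2 p r) < w r :=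
  w_add_w_lt (cr1_ne_cr2 h) (cr1_lt h) (cr2_lt h)

abbrev Vsp (K : Type*) [Field K] (n : ℕ) := ((Fin n × Fin n) → ℕ) →₀ K

/-- fuel-indexed straightening: `Tf q f p α` computes the normal form of
`z_p · z^α`. -/
def Tf (q : K) : ℕ → (Fin n × Fin n) → ((Fin n × Fin n) → ℕ) → Vsp K n
  | 0, _, _ => 0
  | f+1, p, α =>
    if hb : bnd p α then Finsupp.single (α + de p) 1
    else
      have hne : (msupp α).Nonempty := msupp_nonempty_of_not_bnd hb
      cc q p (mx α hne) •
          Finsupp.mapDomain (· + de (mx α hne)) (Tf q f p (α - de (mx α hne))) +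
        dd q p (mx α hne) •
          ((Tf q f (cr2 p (mx α hne)) (α - de (mx α hne))).sum fun β c =>
            c • Tf q f (cr1 p (mx α hne)) β)

lemma Tf_zero (q : K) (p : Fin n × Fin n) (α : (Fin n × Fin n) → ℕ) :
    Tf q 0 p α = 0 := rfl

lemma Tf_succ_bnd (q : K) {f : ℕ} {p : Fin n × Fin n} {α : (Fin n × Fin n) → ℕ}
    (hb : bnd p α) : Tf q (f+1) p α = Finsupp.single (α + de p) 1 := by
  rw [Tf, dif_pos hb]

lemma Tf_succ_not (q : K) {f : ℕ} {p : Fin n × Fin n} {α : (Fin n × Fin n) → ℕ}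
    (hb : ¬ bnd p α) (hne : (msupp α).Nonempty) :
    Tf q (f+1) p α =
      cc q p (mx α hne) •
          Finsupp.mapDomain (· + de (mx α hne)) (Tf q f p (α - de (mx α hne))) +
        dd q p (mx α hne) •
          ((Tf q f (cr2 p (mx α hne)) (α - de (mx α hne))).sum fun β c =>
            c • Tf q f (cr1 p (mx α hne)) β) := by
  rw [Tf, dif_neg hb]

end QMPBW
namespace QMPBW

variable {K : Type*} [Field K] {n : ℕ}

lemma Tf_weight (q : K) : ∀ (f : ℕ) (p : Fin n × Fin n) (α : (Fin n × Fin n) → ℕ) β,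
    β ∈ (Tf q f p α).support → Lam0 β ≤ Lam p α := by
  intro f
  induction f with
  | zero => intro p α β h; simp [Tf_zero] at h
  | succ f ih =>
    intro p α β h
    by_cases hb : bnd p α
    · rw [Tf_succ_bnd q hb] at h
      have h1 := Finsupp.support_single_subset h
      rw [Finset.mem_singleton] at h1
      subst h1
      rw [Lam0_add_de]
      unfold Lam; omega
    · have hne := msupp_nonempty_of_not_bnd hb
      rw [Tf_succ_not q hb hne] at h
      set m := mx α hne with hm
      have hm0 : α m ≠ 0 := mx_mem α hne
      have hsub : Lam0 (α - de m) + w m = Lam0 α := Lam0_sub_de hm0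
      rcases Finset.mem_union.1 (Finsupp.support_add h) with h1 | h1
      · have h2 := Finsupp.support_smul h1
        have h3 := Finsupp.mapDomain_support h2
        rw [Finset.mem_image] at h3
        obtain ⟨γ, hγ, rfl⟩ := h3
        have i1 := ih p (α - de m) γ hγ
        rw [Lam0_add_de]
        unfold Lam at *; omega
      · by_cases hd : dd q p m = 0
        · rw [hd, zero_smul] at h1; simp at h1
        · have hR4 : p.1 < m.1 ∧ p.2 < m.2 := by
            rcases dd_cases q p m with h' | h'
            · exact absurd h' hd
            · exact h'
          have h2 := Finsupp.support_smul h1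
          have h3 := Finsupp.support_sum h2
          rw [Finset.mem_biUnion] at h3
          obtain ⟨γ, hγ, hβ⟩ := h3
          have h4 := Finsupp.support_smul hβ
          have i1 := ih _ _ _ hγ
          have i2 := ih _ _ _ h4
          have hw := w_cr_lt hR4
          unfold Lam at *; omega

lemma Tf_letters (q : K) : ∀ (f : ℕ) (p : Fin n × Fin n) (α : (Fin n × Fin n) → ℕ) β,
    β ∈ (Tf q f p α).support → ∀ x, bnd x α → ¬ idxLt x p → bnd x β := by
  intro f
  induction f with
  | zero => intro p α β h; simp [Tf_zero] at h
  | succ f ih =>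
    intro p α β h x hxα hxp
    by_cases hb : bnd p α
    · rw [Tf_succ_bnd q hb] at h
      have h1 := Finsupp.support_single_subset h
      rw [Finset.mem_singleton] at h1
      subst h1
      exact bnd_add_de hxα hxp
    · have hne := msupp_nonempty_of_not_bnd hb
      rw [Tf_succ_not q hb hne] at h
      set m := mx α hne with hm
      have hm0 : α m ≠ 0 := mx_mem α hne
      have hxm : ¬ idxLt x m := hxα m hm0
      rcases Finset.mem_union.1 (Finsupp.support_add h) with h1 | h1
      · have h2 := Finsupp.support_smul h1
        have h3 := Finsupp.mapDomain_support h2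
        rw [Finset.mem_image] at h3
        obtain ⟨γ, hγ, rfl⟩ := h3
        exact bnd_add_de (ih p (α - de m) γ hγ x (bnd_sub hxα) hxp) hxm
      · by_cases hd : dd q p m = 0
        · rw [hd, zero_smul] at h1; simp at h1
        · have hR4 : p.1 < m.1 ∧ p.2 < m.2 := by
            rcases dd_cases q p m with h' | h'
            · exact absurd h' hd
            · exact h'
          have h2 := Finsupp.support_smul h1
          have h3 := Finsupp.support_sum h2
          rw [Finset.mem_biUnion] at h3
          obtain ⟨γ, hγ, hβ⟩ := h3
          have h4 := Finsupp.support_smul hβ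
          have hx1 : ¬ idxLt x (cr1 p m) := fun hh => hxm (idxLt_trans hh (cr1_lt hR4))
          have hx2 : ¬ idxLt x (cr2 p m) := fun hh => hxm (idxLt_trans hh (cr2_lt hR4))
          exact ih _ _ _ h4 x (ih _ _ _ hγ x (bnd_sub hxα) hx2) hx1

lemma Tf_stable (q : K) : ∀ (N : ℕ), ∀ (f g : ℕ) (p : Fin n × Fin n) (α : (Fin n × Fin n) → ℕ),
    Lam p α ≤ N → N < f → N < g → Tf q f p α = Tf q g p α := by
  intro N
  induction N using Nat.strong_induction_on with
  | _ N ih =>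
    intro f g p α hN hf hg
    have hwp := w_pos p
    have hLam : 1 ≤ Lam p α := by unfold Lam; omega
    obtain ⟨f, rfl⟩ : ∃ f', f = f' + 1 := ⟨f - 1, by omega⟩
    obtain ⟨g, rfl⟩ : ∃ g', g = g' + 1 := ⟨g - 1, by omega⟩
    by_cases hb : bnd p α
    · rw [Tf_succ_bnd q hb, Tf_succ_bnd q hb]
    · have hne := msupp_nonempty_of_not_bnd hb
      rw [Tf_succ_not q hb hne, Tf_succ_not q hb hne]
      set m := mx α hne with hm
      have hm0 : α m ≠ 0 := mx_mem α hne
      have hwm := w_pos m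
      have hsub : Lam0 (α - de m) + w m = Lam0 α := Lam0_sub_de hm0
      have e1 : Tf q f p (α - de m) = Tf q g p (α - de m) := by
        apply ih (N - 1) (by omega) f g
        · unfold Lam at *; omega
        · omega
        · omega
      by_cases hd : dd q p m = 0
      · rw [hd, zero_smul, zero_smul, e1]
      · have hR4 : p.1 < m.1 ∧ p.2 < m.2 := by
          rcases dd_cases q p m with h' | h'
          · exact absurd h' hd
          · exact h'
        have hw := w_cr_lt hR4
        have e2 : Tf q f (cr2 p m) (α - de m) = Tf q g (cr2 p m) (α - de m) := by
          apply ih (N - 1) (by omega) f g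
          · unfold Lam at *; omega
          · omega
          · omega
        rw [e1, e2]
        have e3 : (Finsupp.sum (Tf q g (cr2 p m) (α - de m)) fun β c => c • Tf q f (cr1 p m) β)
            = Finsupp.sum (Tf q g (cr2 p m) (α - de m)) fun β c => c • Tf q g (cr1 p m) β := by
          apply Finsupp.sum_congr
          intro γ hγ
          have hγw : Lam0 γ ≤ Lam (cr2 p m) (α - de m) := Tf_weight q g _ _ γ hγ
          have e4 : Tf q f (cr1 p m) γ = Tf q g (cr1 p m) γ := by
            apply ih (N - 1) (by omega) f g
            · unfold Lam at *; omega
            · omega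
            · omega
          rw [e4]
        rw [e3]

/-- the straightening of `z_p · z^α` -/
def TT (q : K) (p : Fin n × Fin n) (α : (Fin n × Fin n) → ℕ) : Vsp K n :=
  Tf q (Lam p α + 1) p α

lemma Tf_eq_TT (q : K) {f : ℕ} {p : Fin n × Fin n} {α : (Fin n × Fin n) → ℕ}
    (h : Lam p α < f) : Tf q f p α = TT q p α :=
  Tf_stable q (Lam p α) f (Lam p α + 1) p α le_rfl h (by omega)

/-- the straightening operator `v ↦ z_p · v` as a linear endomorphism -/
def Top (q : K) (p : Fin n × Fin n) : Vsp K n →ₗ[K] Vsp K n :=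
  Finsupp.lift (Vsp K n) K ((Fin n × Fin n) → ℕ) (TT q p)

lemma Top_apply (q : K) (p : Fin n × Fin n) (v : Vsp K n) :
    Top q p v = v.sum fun β c => c • TT q p β := rfl

lemma Top_single (q : K) (p : Fin n × Fin n) (α : (Fin n × Fin n) → ℕ) (c : K) :
    Top q p (Finsupp.single α c) = c • TT q p α := by
  rw [Top_apply, Finsupp.sum_single_index (by simp)]

lemma Top_single_one (q : K) (p : Fin n × Fin n) (α : (Fin n × Fin n) → ℕ) :
    Top q p (Finsupp.single α 1) = TT q p α := by
  rw [Top_single, one_smul]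

lemma TT_weight (q : K) {p : Fin n × Fin n} {α : (Fin n × Fin n) → ℕ} {β}
    (h : β ∈ (TT q p α).support) : Lam0 β ≤ Lam p α :=
  Tf_weight q _ p α β h

lemma TT_letters (q : K) {p : Fin n × Fin n} {α : (Fin n × Fin n) → ℕ} {β}
    (h : β ∈ (TT q p α).support) {x} (hxα : bnd x α) (hxp : ¬ idxLt x p) : bnd x β :=
  Tf_letters q _ p α β h x hxα hxp

lemma Top_weight (q : K) {p : Fin n × Fin n} {v : Vsp K n} {B : ℕ}
    (hv : ∀ γ ∈ v.support, Lam0 γ ≤ B) :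
    ∀ β ∈ (Top q p v).support, Lam0 β ≤ w p + B := by
  intro β hβ
  rw [Top_apply] at hβ
  have h3 := Finsupp.support_sum hβ
  rw [Finset.mem_biUnion] at h3
  obtain ⟨γ, hγ, hβ2⟩ := h3
  have h4 := Finsupp.support_smul hβ2
  have := TT_weight q h4
  have := hv γ hγ
  unfold Lam at *; omega

lemma Top_letters (q : K) {p : Fin n × Fin n} {v : Vsp K n} {x : Fin n × Fin n}
    (hv : ∀ γ ∈ v.support, bnd x γ) (hxp : ¬ idxLt x p) :
    ∀ β ∈ (Top q p v).support, bnd x β := by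
  intro β hβ
  rw [Top_apply] at hβ
  have h3 := Finsupp.support_sum hβ
  rw [Finset.mem_biUnion] at h3
  obtain ⟨γ, hγ, hβ2⟩ := h3
  exact TT_letters q (Finsupp.support_smul hβ2) (hv γ hγ) hxp

lemma U1 (q : K) {p : Fin n × Fin n} {α : (Fin n × Fin n) → ℕ} (hb : bnd p α) :
    TT q p α = Finsupp.single (α + de p) 1 :=
  Tf_succ_bnd q hb

lemma U2 (q : K) {p : Fin n × Fin n} {α : (Fin n × Fin n) → ℕ} (hb : ¬ bnd p α)
    (hne : (msupp α).Nonempty) :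
    TT q p α =
      cc q p (mx α hne) •
          Finsupp.mapDomain (· + de (mx α hne)) (TT q p (α - de (mx α hne))) +
        dd q p (mx α hne) •
          Top q (cr1 p (mx α hne)) (TT q (cr2 p (mx α hne)) (α - de (mx α hne))) := by
  have h0 : TT q p α = Tf q (Lam p α + 1) p α := rfl
  rw [h0, Tf_succ_not q hb hne]
  set m := mx α hne with hm
  have hm0 : α m ≠ 0 := mx_mem α hne
  have hwm := w_pos m
  have hwp := w_pos p
  have hsub : Lam0 (α - de m) + w m = Lam0 α := Lam0_sub_de hm0
  have e1 : Tf q (Lam p α) p (α - de m) = TT q p (α - de m) :=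
    Tf_eq_TT q (by unfold Lam at *; omega)
  rw [e1]
  by_cases hd : dd q p m = 0
  · rw [hd, zero_smul, zero_smul]
  · have hR4 : p.1 < m.1 ∧ p.2 < m.2 := by
      rcases dd_cases q p m with h' | h'
      · exact absurd h' hd
      · exact h'
    have hw := w_cr_lt hR4
    have e2 : Tf q (Lam p α) (cr2 p m) (α - de m) = TT q (cr2 p m) (α - de m) :=
      Tf_eq_TT q (by unfold Lam at *; omega)
    rw [e2]
    have e3 : (Finsupp.sum (TT q (cr2 p m) (α - de m)) fun β c => c • Tf q (Lam p α) (cr1 p m) β)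
        = Top q (cr1 p m) (TT q (cr2 p m) (α - de m)) := by
      rw [Top_apply]
      apply Finsupp.sum_congr
      intro γ hγ
      have hγw : Lam0 γ ≤ Lam (cr2 p m) (α - de m) := TT_weight q hγ
      have e4 : Tf q (Lam p α) (cr1 p m) γ = TT q (cr1 p m) γ :=
        Tf_eq_TT q (by unfold Lam at *; omega)
      rw [e4]
    rw [e3]

end QMPBW
namespace QMPBW

variable {K : Type*} [Field K] {n : ℕ}

/-- shift by `ε_m`, as a linear map -/
def Sh (m : Fin n × Fin n) : Vsp K n →ₗ[K] Vsp K n :=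
  Finsupp.lmapDomain K K (· + de m)

lemma Sh_apply (m : Fin n × Fin n) (v : Vsp K n) :
    Sh m v = Finsupp.mapDomain (· + de m) v := rfl

lemma Sh_single (m : Fin n × Fin n) (β : (Fin n × Fin n) → ℕ) (c : K) :
    Sh (K := K) m (Finsupp.single β c) = Finsupp.single (β + de m) c :=
  Finsupp.mapDomain_single

/-- two linear maps agreeing on basis vectors with a support property agree -/
lemma ext_on_supp {P : ((Fin n × Fin n) → ℕ) → Prop} (F G : Vsp K n →ₗ[K] Vsp K n)
    (v : Vsp K n) (hv : ∀ β ∈ v.support, P β)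
    (h : ∀ β, P β → F (Finsupp.single β 1) = G (Finsupp.single β 1)) :
    F v = G v := by
  conv_lhs => rw [← Finsupp.sum_single v]
  conv_rhs => rw [← Finsupp.sum_single v]
  rw [map_finsuppSum, map_finsuppSum]
  apply Finsupp.sum_congr
  intro β hβ
  have h1 : Finsupp.single β (v β) = (v β) • Finsupp.single β 1 := by
    rw [Finsupp.smul_single', mul_one]
  rw [h1, map_smul, map_smul, h β (hv β hβ)]

/-- on vectors all whose exponents are bounded by `m`, `Top m` is the shift -/
lemma Top_bnd (q : K) {m : Fin n × Fin n} {v : Vsp K n}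
    (hv : ∀ β ∈ v.support, bnd m β) : Top q m v = Sh m v := by
  apply ext_on_supp (Top q m) (Sh m) v hv
  intro β hβ
  rw [Top_single_one, U1 q hβ, Sh_single]

lemma TT_shift_single (q : K) {p m : Fin n × Fin n} {β : (Fin n × Fin n) → ℕ}
    (hpm : idxLt p m) (hβ : bnd m β) :
    TT q p (β + de m) =
      cc q p m • Finsupp.mapDomain (· + de m) (TT q p β) +
        dd q p m • Top q (cr1 p m) (TT q (cr2 p m) β) := by
  have hm1 : (β + de m) m ≠ 0 := by simp [de_self]
  have hnb : ¬ bnd p (β + de m) := fun hb => hb m hm1 hpm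
  have hne' : (msupp (β + de m)).Nonempty := ⟨m, mem_msupp.2 hm1⟩
  have hmx : mx (β + de m) hne' = m := mx_eq hm1 (bnd_add_de hβ (idxLt_irrefl m)) hne'
  have h := U2 q hnb hne'
  rw [hmx, add_de_sub_de] at h
  exact h

/-- operator form of the unfolding: commuting `Top p` past the shift `Sh m` -/
lemma Top_shift (q : K) {p m : Fin n × Fin n} (hpm : idxLt p m) {v : Vsp K n}
    (hv : ∀ β ∈ v.support, bnd m β) :
    Top q p (Sh m v) =
      cc q p m • Sh m (Top q p v) +
        dd q p m • Top q (cr1 p m) (Top q (cr2 p m) v) := by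
  have h := ext_on_supp (P := bnd m) ((Top q p).comp (Sh m))
    (cc q p m • (Sh m).comp (Top q p) +
      dd q p m • (Top q (cr1 p m)).comp (Top q (cr2 p m))) v hv ?_
  · simpa only [LinearMap.comp_apply, LinearMap.add_apply, LinearMap.smul_apply] using h
  intro β hβ
  simp only [LinearMap.comp_apply, LinearMap.add_apply, LinearMap.smul_apply]
  rw [Sh_single, Top_single_one, Top_single_one, Top_single_one]
  rw [TT_shift_single q hpm hβ, Sh_apply]

/-- the master commutation statement -/
def MS (q : K) (p r : Fin n × Fin n) (v : Vsp K n) : Prop :=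
  Top q p (Top q r v) =
    cc q p r • Top q r (Top q p v) +
      dd q p r • Top q (cr1 p r) (Top q (cr2 p r) v)

lemma MS_vec {q : K} {N : ℕ} {p r : Fin n × Fin n} (v : Vsp K n)
    (hv : ∀ β ∈ v.support, Lam0 β ≤ N)
    (hb : ∀ β, Lam0 β ≤ N → MS q p r (Finsupp.single β 1)) : MS q p r v := by
  unfold MS
  have h := ext_on_supp (P := fun β => Lam0 β ≤ N) ((Top q p).comp (Top q r))
    (cc q p r • (Top q r).comp (Top q p) +
      dd q p r • (Top q (cr1 p r)).comp (Top q (cr2 p r))) v hv ?_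
  · simpa only [LinearMap.comp_apply, LinearMap.add_apply, LinearMap.smul_apply] using h
  intro β hβ
  simpa only [MS, LinearMap.comp_apply, LinearMap.add_apply, LinearMap.smul_apply] using hb β hβ

lemma cc_eq_q_row {q : K} {p r : Fin n × Fin n} (h : p.1 = r.1) : cc q p r = q :=
  if_pos (Or.inl h)

lemma cc_eq_q_col {q : K} {p r : Fin n × Fin n} (h : p.2 = r.2) : cc q p r = q :=
  if_pos (Or.inr h)

lemma cc_eq_one {q : K} {p r : Fin n × Fin n} (h1 : p.1 ≠ r.1) (h2 : p.2 ≠ r.2) :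
    cc q p r = 1 := by
  simp [cc, h1, h2]

lemma dd_eq {q : K} {p r : Fin n × Fin n} (h1 : p.1 < r.1) (h2 : p.2 < r.2) :
    dd q p r = q - q⁻¹ := if_pos ⟨h1, h2⟩

lemma dd_eq_zero {q : K} {p r : Fin n × Fin n} (h : ¬ (p.1 < r.1 ∧ p.2 < r.2)) :
    dd q p r = 0 := if_neg h

end QMPBW
namespace QMPBW

variable {K : Type*} [Field K] {n : ℕ}

set_option maxHeartbeats 2000000 in
theorem master_single (q : K) (hq : q ≠ 0) :
    ∀ (N : ℕ) (α : (Fin n × Fin n) → ℕ), Lam0 α ≤ N → ∀ p r, idxLt p r →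
      MS q p r (Finsupp.single α 1) := by
  intro N
  induction N using Nat.strong_induction_on with
  | _ N ih =>
  intro α hα p r hpr
  have hIHv : ∀ (p' r' : Fin n × Fin n), idxLt p' r' → ∀ v : Vsp K n,
      (∀ β ∈ v.support, Lam0 β < N) → MS q p' r' v := by
    intro p' r' h v hv
    rcases Nat.eq_zero_or_pos N with hN | hN
    · have hv0 : v = 0 := by
        by_contra h0
        obtain ⟨β, hβ⟩ := Finsupp.support_nonempty_iff.2 h0
        have := hv β hβ; omega
      subst hv0
      unfold MS
      simp
    · exact MS_vec v (fun β hβ => by have := hv β hβ; omega)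
        (fun β hβ => ih (N-1) (by omega) β hβ p' r' h)
  by_cases hbr : bnd r α
  · -- CASE AB : all letters of α are ≤ r
    unfold MS
    rw [Top_single_one q r α, U1 q hbr, Top_single_one q p α]
    rw [Top_single_one q p (α + de r), TT_shift_single q hpr hbr]
    rw [Top_single_one q (cr2 p r) α]
    have h3 : Top q r (TT q p α) = Sh r (TT q p α) :=
      Top_bnd q (fun β hβ => TT_letters q hβ hbr (idxLt_asymm hpr))
    rw [h3, Sh_apply]
  · -- CASE C
    have hne := msupp_nonempty_of_not_bnd hbr
    set m := mx α hne with hmdef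
    have hm0 : α m ≠ 0 := mx_mem α hne
    have hbm : bnd m α := bnd_mx α hne
    have hrm : idxLt r m := idxLt_mx hbr hne
    have hpm : idxLt p m := idxLt_trans hpr hrm
    set A : Vsp K n := Finsupp.single (α - de m) 1 with hAdef
    have hwm := w_pos m
    have hsub : Lam0 (α - de m) + w m = Lam0 α := Lam0_sub_de hm0
    have hAsup : ∀ β ∈ A.support, Lam0 β < N := by
      intro β hβ
      have h1 := Finsupp.support_single_subset hβ
      rw [Finset.mem_singleton] at h1; subst h1
      omega
    have hAbnd : ∀ β ∈ A.support, bnd m β := by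
      intro β hβ
      have h1 := Finsupp.support_single_subset hβ
      rw [Finset.mem_singleton] at h1; subst h1
      exact bnd_sub hbm
    have hTAsup : ∀ z, idxLt z m → ∀ β ∈ (Top q z A).support, Lam0 β < N := by
      intro z hz β hβ
      have h1 : ∀ γ ∈ A.support, Lam0 γ ≤ Lam0 (α - de m) := by
        intro γ hγ
        have h2 := Finsupp.support_single_subset hγ
        rw [Finset.mem_singleton] at h2; subst h2
        exact le_rfl
      have h2 := Top_weight q h1 β hβ
      have h3 := w_lt_w hz
      omega
    have hTAbnd : ∀ z, ¬ idxLt m z → ∀ β ∈ (Top q z A).support, bnd m β :=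
      fun z hz => Top_letters q hAbnd hz
    have hswap : ∀ x y, idxLt x y → ∀ v : Vsp K n, (∀ β ∈ v.support, Lam0 β < N) →
        Top q x (Top q y v) = cc q x y • Top q y (Top q x v)
          + dd q x y • Top q (cr1 x y) (Top q (cr2 x y) v) :=
      fun x y h v hv => hIHv x y h v hv
    have hUx : ∀ x, idxLt x m → Top q x (Finsupp.single α 1) =
        cc q x m • Sh m (Top q x A) +
          dd q x m • Top q (cr1 x m) (Top q (cr2 x m) A) := by
      intro x hx
      have hnb : ¬ bnd x α := fun hb => (hb m hm0) hx
      rw [Top_single_one, U2 q hnb hne, ← hmdef]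
      rw [(Top_single_one q x (α - de m)).symm, (Top_single_one q (cr2 x m) (α - de m)).symm,
        ← Sh_apply, ← hAdef]
    have hswc : ∀ x y : Fin n × Fin n, idxLt x y → x.1 ≠ y.1 → y.2 < x.2 →
        ∀ v : Vsp K n, (∀ β ∈ v.support, Lam0 β < N) →
        Top q x (Top q y v) = Top q y (Top q x v) := by
      intro x y h h1 h2 v hv
      have h0 := hswap x y h v hv
      rwa [cc_eq_one h1 (ne_of_gt h2), one_smul,
        dd_eq_zero (fun hc => lt_asymm h2 hc.2), zero_smul, add_zero] at h0
    have hswq : ∀ x y : Fin n × Fin n, idxLt x y → (x.1 = y.1 ∨ x.2 = y.2) →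
        ∀ v : Vsp K n, (∀ β ∈ v.support, Lam0 β < N) →
        Top q x (Top q y v) = q • Top q y (Top q x v) := by
      intro x y h hcq v hv
      have hd : dd q x y = 0 := by
        apply dd_eq_zero
        rintro ⟨h1, h2⟩
        rcases hcq with hc | hc
        · rw [hc] at h1; exact lt_irrefl _ h1
        · rw [hc] at h2; exact lt_irrefl _ h2
      have h0 := hswap x y h v hv
      rw [hd, zero_smul, add_zero] at h0
      rcases hcq with hc | hc
      · rwa [cc_eq_q_row hc] at h0
      · rwa [cc_eq_q_col hc] at h0
    have hswq' : ∀ x y : Fin n × Fin n, idxLt x y → (x.1 = y.1 ∨ x.2 = y.2) →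
        ∀ v : Vsp K n, (∀ β ∈ v.support, Lam0 β < N) →
        Top q y (Top q x v) = q⁻¹ • Top q x (Top q y v) := by
      intro x y h hc v hv
      rw [hswq x y h hc v hv, smul_smul, inv_mul_cancel₀ hq, one_smul]
    have hswR4 : ∀ (x : Fin n × Fin n) (y1 y2 : Fin n), idxLt x (y1, y2) → x.1 < y1 → x.2 < y2 →
        ∀ v : Vsp K n, (∀ β ∈ v.support, Lam0 β < N) →
        Top q x (Top q (y1, y2) v) = Top q (y1, y2) (Top q x v)
          + (q - q⁻¹) • Top q (x.1, y2) (Top q (y1, x.2) v) := by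
      intro x y1 y2 h h1 h2 v hv
      have h0 := hswap x (y1, y2) h v hv
      rw [cc_eq_one (ne_of_lt h1) (ne_of_lt h2), one_smul, dd_eq h1 h2] at h0
      exact h0
    unfold MS
    by_cases hDpr : p.1 < r.1 ∧ p.2 < r.2
    case neg =>
      have hdd0 : dd q p r = 0 := dd_eq_zero hDpr
      rw [hdd0, zero_smul, add_zero]
      rw [hUx r hrm, map_add, map_smul, map_smul]
      rw [Top_shift q hpm (hTAbnd r (idxLt_asymm hrm))]
      rw [hswap p r hpr A hAsup, hdd0, zero_smul, add_zero]
      rw [hUx p hpm, map_add, map_smul, map_smul]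
      rw [Top_shift q hrm (hTAbnd p (idxLt_asymm hpm))]
      rw [map_smul]
      simp only [cr1, cr2]
      obtain hpr1 | ⟨hpr1, hpr2⟩ := hpr
      · -- p.1 < r.1
        have hpr2 : ¬ p.2 < r.2 := fun h => hDpr ⟨hpr1, h⟩
        obtain hrm1 | ⟨hrm1, hrm2⟩ := hrm
        · -- rows p.1 < r.1 < m.1  (case IV with p.2 ≥ r.2)
          by_cases hy : r.2 < m.2
          · by_cases hx : p.2 < m.2
            · -- IV.6 (p.2 = r.2 < m.2) or IV.7 (r.2 < p.2 < m.2)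
              have hpm1 : p.1 < m.1 := lt_trans hpr1 hrm1
              have hdpm : dd q p m = q - q⁻¹ := dd_eq hpm1 hx
              have hdrm : dd q r m = q - q⁻¹ := dd_eq hrm1 hy
              have hcpm : cc q p m = 1 := cc_eq_one (ne_of_lt hpm1) (ne_of_lt hx)
              have hcrm : cc q r m = 1 := cc_eq_one (ne_of_lt hrm1) (ne_of_lt hy)
              rw [hdpm, hdrm, hcpm, hcrm]
              rcases lt_trichotomy p.2 r.2 with hc | hc | hc
              · exact absurd hc hpr2
              · -- IV.6 : p.2 = r.2
                have hcpr : cc q p r = q := cc_eq_q_col hc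
                rw [hcpr, ← hc]
                rw [hswq' r (m.1, p.2) (Or.inl hrm1) (Or.inr hc.symm) A hAsup]
                rw [map_smul]
                rw [hswc (p.1, m.2) r (Or.inl hpr1) (ne_of_lt hpr1) hy
                  (Top q (m.1, p.2) A) (hTAsup _ (Or.inr ⟨rfl, hx⟩))]
                rw [hswR4 p r.1 m.2 (Or.inl hpr1) hpr1 hx
                  (Top q (m.1, p.2) A) (hTAsup _ (Or.inr ⟨rfl, hx⟩))]
                have hwr : ((r.1 : Fin n), (p.2 : Fin n)) = r := by rw [hc]
                rw [hwr]
                rw [hswq p (m.1, p.2) (Or.inl hpm1) (Or.inr rfl) A hAsup]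
                rw [map_smul]
                rw [hswc (p.1, m.2) r (Or.inl hpr1) (ne_of_lt hpr1) hy
                  (Top q (m.1, p.2) A) (hTAsup _ (Or.inr ⟨rfl, hx⟩))]
                match_scalars <;> field_simp <;> ring
              · -- IV.7 : r.2 < p.2
                have hcpr : cc q p r = 1 := cc_eq_one (ne_of_lt hpr1) (ne_of_gt hc)
                rw [hcpr]
                have h1 := hswR4 r m.1 p.2 (Or.inl hrm1) hrm1 hc A hAsup
                have h1' : Top q (m.1, p.2) (Top q r A) =
                    Top q r (Top q (m.1, p.2) A)
                      - (q - q⁻¹) • Top q (r.1, p.2) (Top q (m.1, r.2) A) := by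
                  rw [h1]; abel
                rw [h1', map_sub, map_smul]
                rw [hswc (p.1, m.2) r (Or.inl hpr1) (ne_of_lt hpr1) hy
                  (Top q (m.1, p.2) A) (hTAsup _ (Or.inr ⟨rfl, hx⟩))]
                rw [hswR4 p r.1 m.2 (Or.inl hpr1) hpr1 hx
                  (Top q (m.1, r.2) A) (hTAsup _ (Or.inr ⟨rfl, hy⟩))]
                rw [hswc p (m.1, r.2) (Or.inl hpm1) (ne_of_lt hpm1) hc A hAsup]
                match_scalars <;> ring
            · -- IV.8 (r.2 < m.2 = p.2) or IV.9 (r.2 < m.2 < p.2)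
              have hpm1 : p.1 < m.1 := lt_trans hpr1 hrm1
              have hdrm : dd q r m = q - q⁻¹ := dd_eq hrm1 hy
              have hdpm : dd q p m = 0 := dd_eq_zero (fun hcc => hx hcc.2)
              have hcrm : cc q r m = 1 := cc_eq_one (ne_of_lt hrm1) (ne_of_lt hy)
              have hrp2 : r.2 < p.2 := lt_of_lt_of_le hy (le_of_not_gt hx)
              have hcpr : cc q p r = 1 := cc_eq_one (ne_of_lt hpr1) (ne_of_gt hrp2)
              rw [hdrm, hdpm, hcrm, hcpr]
              rcases eq_or_lt_of_le (le_of_not_gt hx) with hc | hc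
              · -- IV.8 : m.2 = p.2
                rw [hswq p (r.1, m.2) (Or.inl hpr1) (Or.inr hc.symm)
                  (Top q (m.1, r.2) A) (hTAsup _ (Or.inr ⟨rfl, hy⟩))]
                rw [hswc p (m.1, r.2) (Or.inl hpm1) (ne_of_lt hpm1) hrp2 A hAsup]
                have hcpm : cc q p m = q := cc_eq_q_col hc.symm
                rw [hcpm]
                match_scalars <;> ring
              · -- IV.9 : m.2 < p.2
                have hcpm : cc q p m = 1 := cc_eq_one (ne_of_lt hpm1) (ne_of_gt hc)
                rw [hcpm]
                rw [hswc p (r.1, m.2) (Or.inl hpr1) (ne_of_lt hpr1) hc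
                  (Top q (m.1, r.2) A) (hTAsup _ (Or.inr ⟨rfl, hy⟩))]
                rw [hswc p (m.1, r.2) (Or.inl hpm1) (ne_of_lt hpm1) hrp2 A hAsup]
                match_scalars <;> ring
          · -- m.2 ≤ r.2 ≤ p.2 : trivial
            have hdpm : dd q p m = 0 := dd_eq_zero (fun hc => hy (by omega))
            have hdrm : dd q r m = 0 := dd_eq_zero (fun hc => hy hc.2)
            rw [hdpm, hdrm]
            module
        · -- p.1 < r.1 = m.1 (case III), r.2 < m.2
          have hpm1 : p.1 < m.1 := hrm1 ▸ hpr1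
          have hdrm : dd q r m = 0 := dd_eq_zero (fun hcc => by
            rw [hrm1] at hcc; exact lt_irrefl _ hcc.1)
          rw [hdrm]
          by_cases hx : p.2 < m.2
          · have hdpm : dd q p m = q - q⁻¹ := dd_eq hpm1 hx
            have hcpm : cc q p m = 1 := cc_eq_one (ne_of_lt hpm1) (ne_of_lt hx)
            have hcrm : cc q r m = q := cc_eq_q_row hrm1
            rw [hdpm, hcpm, hcrm, ← hrm1]
            rcases lt_trichotomy p.2 r.2 with hc | hc | hc
            · exact absurd hc hpr2
            · -- III.c : p.2 = r.2
              have hcpr : cc q p r = q := cc_eq_q_col hc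
              rw [hcpr]
              have ha2r : ((r.1 : Fin n), (p.2 : Fin n)) = r := by rw [hc]
              rw [ha2r]
              rw [hswc (p.1, m.2) r (Or.inl hpr1) (ne_of_lt hpr1) hrm2
                (Top q r A) (hTAsup r (Or.inr ⟨hrm1, hrm2⟩))]
              module
            · -- III.b : r.2 < p.2
              have hcpr : cc q p r = 1 := cc_eq_one (ne_of_lt hpr1) (ne_of_gt hc)
              rw [hcpr]
              rw [hswq' r (r.1, p.2) (Or.inr ⟨rfl, hc⟩) (Or.inl rfl) A hAsup]
              rw [map_smul]
              rw [hswc (p.1, m.2) r (Or.inl hpr1) (ne_of_lt hpr1) hrm2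
                (Top q (r.1, p.2) A) (hTAsup _ (Or.inr ⟨hrm1, hx⟩))]
              match_scalars <;> field_simp <;> ring
          · rw [dd_eq_zero (fun hcc => hx hcc.2)]
            module
      · -- p.1 = r.1 (case II), p.2 < r.2
        obtain hrm1 | ⟨hrm1, hrm2⟩ := hrm
        · -- p.1 = r.1 < m.1 : case II
          have hpm1 : p.1 < m.1 := hpr1 ▸ hrm1
          by_cases hx : p.2 < m.2
          · have ha2m : idxLt ((m.1 : Fin n), (p.2 : Fin n)) m := Or.inr ⟨rfl, hx⟩
            have hdpm : dd q p m = q - q⁻¹ := dd_eq hpm1 hx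
            have hcpm : cc q p m = 1 := cc_eq_one (ne_of_lt hpm1) (ne_of_lt hx)
            have hcpr : cc q p r = q := cc_eq_q_row hpr1
            rw [hdpm, hcpm, hcpr, ← hpr1]
            rw [← hswc r (m.1, p.2) (Or.inl hrm1) (ne_of_lt hrm1) hpr2 A hAsup]
            by_cases hym : r.2 < m.2
            · -- II.c
              have hdrm : dd q r m = q - q⁻¹ := dd_eq hrm1 hym
              have hcrm : cc q r m = 1 := cc_eq_one (ne_of_lt hrm1) (ne_of_lt hym)
              rw [hdrm, hcrm]
              have hra1 : idxLt r ((p.1 : Fin n), (m.2 : Fin n)) := Or.inr ⟨hpr1.symm, hym⟩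
              rw [hswq' r (p.1, m.2) hra1 (Or.inl hpr1.symm)
                (Top q (m.1, p.2) A) (hTAsup _ ha2m)]
              rw [hswq p (p.1, m.2) (Or.inr ⟨rfl, hx⟩) (Or.inl rfl)
                (Top q (m.1, r.2) A) (hTAsup _ (Or.inr ⟨rfl, hym⟩))]
              rw [hswR4 p m.1 r.2 (Or.inl hpm1) hpm1 hpr2 A hAsup]
              have hur : ((p.1 : Fin n), (r.2 : Fin n)) = r := by rw [hpr1]
              rw [hur]
              rw [map_add, map_smul]
              rw [hswq' r (p.1, m.2) hra1 (Or.inl hpr1.symm)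
                (Top q (m.1, p.2) A) (hTAsup _ ha2m)]
              match_scalars <;> field_simp <;> ring
            · -- II.b
              have hdrm : dd q r m = 0 := dd_eq_zero (fun hcc => hym hcc.2)
              rw [hdrm]
              rcases eq_or_lt_of_le (le_of_not_gt hym) with hc | hc
              · -- II.b.ii : m.2 = r.2
                have hcrm : cc q r m = q := cc_eq_q_col hc.symm
                rw [hcrm]
                have ha1r : ((p.1 : Fin n), (m.2 : Fin n)) = r := by rw [hpr1, hc]
                rw [ha1r]
                module
              · -- II.b.i : m.2 < r.2
                have hcrm : cc q r m = 1 := cc_eq_one (ne_of_lt hrm1) (ne_of_gt hc)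
                rw [hcrm]
                rw [hswq (p.1, m.2) r (Or.inr ⟨hpr1, hc⟩) (Or.inl hpr1)
                  (Top q (m.1, p.2) A) (hTAsup _ ha2m)]
                module
          · have hdpm : dd q p m = 0 := dd_eq_zero (fun hcc => hx hcc.2)
            have hdrm : dd q r m = 0 := dd_eq_zero (fun hcc => hx (lt_trans hpr2 hcc.2))
            rw [hdpm, hdrm]
            module
        · -- all rows equal : trivial
          have hdpm : dd q p m = 0 := dd_eq_zero (fun hc => by
            rw [hpr1, hrm1] at hc; exact lt_irrefl _ hc.1)
          have hdrm : dd q r m = 0 := dd_eq_zero (fun hc => by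
            rw [hrm1] at hc; exact lt_irrefl _ hc.1)
          rw [hdpm, hdrm]
          module
    case pos =>
      have hswR4c : ∀ (x1 x2 y1 y2 : Fin n), idxLt (x1, x2) (y1, y2) → x1 < y1 → x2 < y2 →
          ∀ v : Vsp K n, (∀ β ∈ v.support, Lam0 β < N) →
          Top q (x1, x2) (Top q (y1, y2) v) = Top q (y1, y2) (Top q (x1, x2) v)
            + (q - q⁻¹) • Top q (x1, y2) (Top q (y1, x2) v) := by
        intro x1 x2 y1 y2 h h1 h2 v hv
        have h0 := hswap (x1, x2) (y1, y2) h v hv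
        rw [cc_eq_one (ne_of_lt h1) (ne_of_lt h2), one_smul, dd_eq h1 h2] at h0
        exact h0
      have hr1m : r.1 ≤ m.1 := by
        rcases hrm with h | ⟨h, -⟩
        · exact le_of_lt h
        · exact le_of_eq h
      have hwm' : idxLt ((r.1 : Fin n), (p.2 : Fin n)) m := by
        rcases hrm with h | ⟨h1, h2⟩
        · exact Or.inl h
        · exact Or.inr ⟨h1, lt_trans hDpr.2 h2⟩
      have hum : idxLt ((p.1 : Fin n), (r.2 : Fin n)) m := Or.inl (lt_of_lt_of_le hDpr.1 hr1m)
      have hrr : ((r.1 : Fin n), (r.2 : Fin n)) = r := rfl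
      have hdpr : dd q p r = q - q⁻¹ := dd_eq hDpr.1 hDpr.2
      have hcpr : cc q p r = 1 := cc_eq_one (ne_of_lt hDpr.1) (ne_of_lt hDpr.2)
      rw [hUx r hrm, map_add, map_smul, map_smul]
      rw [Top_shift q hpm (hTAbnd r (idxLt_asymm hrm))]
      rw [hswap p r hpr A hAsup]
      rw [map_add (Sh m), map_smul, map_smul]
      rw [hUx p hpm, map_add, map_smul, map_smul]
      rw [Top_shift q hrm (hTAbnd p (idxLt_asymm hpm))]
      simp only [cr1, cr2]
      have hXw := hUx (r.1, p.2) hwm'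
      simp only [cr1, cr2] at hXw
      rw [hXw, map_add, map_smul, map_smul]
      rw [Top_shift q hum (hTAbnd (r.1, p.2) (idxLt_asymm hwm'))]
      simp only [cr1, cr2]
      rw [hdpr, hcpr]
      obtain hrm1 | ⟨hrm1, hrm2⟩ := hrm
      · -- rows p.1 < r.1 < m.1, cols p.2 < r.2
        have hpm1 : p.1 < m.1 := lt_trans hDpr.1 hrm1
        rcases lt_trichotomy r.2 m.2 with hy | hy | hy
        · -- IV.1 : p.2 < r.2 < m.2
          have hx : p.2 < m.2 := lt_trans hDpr.2 hy
          rw [dd_eq hpm1 hx, dd_eq hrm1 hy,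
            dd_eq (show ((p.1 : Fin n), (r.2 : Fin n)).1 < m.1 from hpm1) hy,
            dd_eq (show ((r.1 : Fin n), (p.2 : Fin n)).1 < m.1 from hrm1) hx,
            cc_eq_one (ne_of_lt hpm1) (ne_of_lt hx),
            cc_eq_one (ne_of_lt hrm1) (ne_of_lt hy),
            cc_eq_one (p := ((p.1 : Fin n), (r.2 : Fin n))) (r := m)
              (ne_of_lt hpm1) (ne_of_lt hy),
            cc_eq_one (p := ((r.1 : Fin n), (p.2 : Fin n))) (r := m)
              (ne_of_lt hrm1) (ne_of_lt hx)]
          rw [← hswc r (m.1, p.2) (Or.inl hrm1) (ne_of_lt hrm1) hDpr.2 A hAsup]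
          rw [hswc (p.1, m.2) r (Or.inl hDpr.1) (ne_of_lt hDpr.1) hy
            (Top q (m.1, p.2) A) (hTAsup _ (Or.inr ⟨rfl, hx⟩))]
          rw [hswR4 p r.1 m.2 (Or.inl hDpr.1) hDpr.1 hx
            (Top q (m.1, r.2) A) (hTAsup _ (Or.inr ⟨rfl, hy⟩))]
          rw [hswR4 p m.1 r.2 (Or.inl hpm1) hpm1 hDpr.2 A hAsup]
          rw [map_add, map_smul]
          have h1 := hswR4c r.1 p.2 m.1 r.2 (Or.inl hrm1) hrm1 hDpr.2 A hAsup
          rw [hrr] at h1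
          rw [h1, map_add, map_smul]
          rw [hswc (p.1, m.2) r (Or.inl hDpr.1) (ne_of_lt hDpr.1) hy
            (Top q (m.1, p.2) A) (hTAsup _ (Or.inr ⟨rfl, hx⟩))]
          have h2 := hswR4c p.1 r.2 r.1 m.2 (Or.inl hDpr.1) hDpr.1 hy
            (Top q (m.1, p.2) A) (hTAsup _ (Or.inr ⟨rfl, hx⟩))
          rw [hrr] at h2
          rw [h2]
          rw [hswc (p.1, m.2) r (Or.inl hDpr.1) (ne_of_lt hDpr.1) hy
            (Top q (m.1, p.2) A) (hTAsup _ (Or.inr ⟨rfl, hx⟩))]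
          match_scalars <;> ring
        · -- IV.2 : p.2 < r.2 = m.2
          have hx : p.2 < m.2 := hy ▸ hDpr.2
          rw [dd_eq hpm1 hx, dd_eq_zero (fun hc => absurd hc.2 (hy ▸ lt_irrefl _)),
            dd_eq_zero (fun hc => absurd hc.2 (show ¬ ((p.1 : Fin n), (r.2 : Fin n)).2 < m.2
              from hy ▸ lt_irrefl _)),
            dd_eq (show ((r.1 : Fin n), (p.2 : Fin n)).1 < m.1 from hrm1) hx,
            cc_eq_one (ne_of_lt hpm1) (ne_of_lt hx),
            cc_eq_q_col (hy : (r.2 : Fin n) = m.2),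
            cc_eq_q_col (p := ((p.1 : Fin n), (r.2 : Fin n))) (r := m) hy,
            cc_eq_one (p := ((r.1 : Fin n), (p.2 : Fin n))) (r := m)
              (ne_of_lt hrm1) (ne_of_lt hx)]
          rw [← hy, hrr]
          rw [← hswc r (m.1, p.2) (Or.inl hrm1) (ne_of_lt hrm1) hDpr.2 A hAsup]
          rw [hswq (p.1, r.2) r (Or.inl hDpr.1) (Or.inr rfl)
            (Top q (m.1, p.2) A) (hTAsup _ (Or.inr ⟨rfl, hx⟩))]
          match_scalars <;> field_simp <;> ring
        · -- m.2 < r.2 : IV.3 / IV.4 / IV.5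
          have hdrm : dd q r m = 0 := dd_eq_zero (fun hc => lt_asymm hy hc.2)
          have hcrm : cc q r m = 1 := cc_eq_one (ne_of_lt hrm1) (ne_of_gt hy)
          have hdum : dd q ((p.1 : Fin n), (r.2 : Fin n)) m = 0 :=
            dd_eq_zero (fun hc => lt_asymm hy hc.2)
          have hcum : cc q ((p.1 : Fin n), (r.2 : Fin n)) m = 1 :=
            cc_eq_one (p := ((p.1 : Fin n), (r.2 : Fin n))) (r := m)
              (ne_of_lt hpm1) (ne_of_gt hy)
          rw [hdrm, hcrm, hdum, hcum]
          rcases lt_trichotomy p.2 m.2 with hx | hx | hx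
          · -- IV.3 : p.2 < m.2 < r.2
            rw [dd_eq hpm1 hx, cc_eq_one (ne_of_lt hpm1) (ne_of_lt hx),
              dd_eq (show ((r.1 : Fin n), (p.2 : Fin n)).1 < m.1 from hrm1) hx,
              cc_eq_one (p := ((r.1 : Fin n), (p.2 : Fin n))) (r := m)
                (ne_of_lt hrm1) (ne_of_lt hx)]
            rw [← hswc r (m.1, p.2) (Or.inl hrm1) (ne_of_lt hrm1) hDpr.2 A hAsup]
            have h1 := hswR4c p.1 m.2 r.1 r.2 (Or.inl hDpr.1) hDpr.1 hy
              (Top q (m.1, p.2) A) (hTAsup _ (Or.inr ⟨rfl, hx⟩))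
            rw [hrr] at h1
            rw [h1]
            match_scalars <;> ring
          · -- IV.4 : p.2 = m.2 < r.2
            rw [dd_eq_zero (fun hc => absurd hc.2 (hx ▸ lt_irrefl _)),
              dd_eq_zero (fun hc => absurd hc.2 (show ¬ ((r.1 : Fin n), (p.2 : Fin n)).2 < m.2
                from hx ▸ lt_irrefl _)),
              cc_eq_q_col (hx : (p.2 : Fin n) = m.2),
              cc_eq_q_col (p := ((r.1 : Fin n), (p.2 : Fin n))) (r := m) hx]
            module
          · -- IV.5 : m.2 < p.2 < r.2
            rw [dd_eq_zero (fun hc => lt_asymm hx hc.2),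
              dd_eq_zero (p := ((r.1 : Fin n), (p.2 : Fin n))) (r := m)
                (fun hc => lt_asymm hx hc.2),
              cc_eq_one (ne_of_lt hpm1) (ne_of_gt hx),
              cc_eq_one (p := ((r.1 : Fin n), (p.2 : Fin n))) (r := m)
                (ne_of_lt hrm1) (ne_of_gt hx)]
            module
      · -- III.d : p.1 < r.1 = m.1, p.2 < r.2 < m.2
        have hpm1 : p.1 < m.1 := hrm1 ▸ hDpr.1
        have hx : p.2 < m.2 := lt_trans hDpr.2 hrm2
        rw [dd_eq hpm1 hx, cc_eq_one (ne_of_lt hpm1) (ne_of_lt hx),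
          dd_eq_zero (fun hc => absurd hc.1 (hrm1 ▸ lt_irrefl _)),
          cc_eq_q_row hrm1,
          dd_eq (show ((p.1 : Fin n), (r.2 : Fin n)).1 < m.1 from hpm1) hrm2,
          cc_eq_one (p := ((p.1 : Fin n), (r.2 : Fin n))) (r := m)
            (ne_of_lt hpm1) (ne_of_lt hrm2),
          dd_eq_zero (fun hc => absurd hc.1
            (show ¬ ((r.1 : Fin n), (p.2 : Fin n)).1 < m.1 from hrm1 ▸ lt_irrefl _)),
          cc_eq_q_row (show ((r.1 : Fin n), (p.2 : Fin n)).1 = m.1 from hrm1)]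
        rw [← hrm1, hrr]
        rw [hswq (r.1, p.2) r (Or.inr ⟨rfl, hDpr.2⟩) (Or.inl rfl) A hAsup]
        rw [map_smul]
        rw [hswc (p.1, m.2) r (Or.inl hDpr.1) (ne_of_lt hDpr.1) hrm2
          (Top q (r.1, p.2) A) (hTAsup _ hwm')]
        match_scalars <;> field_simp <;> ring

end QMPBW
namespace QMPBW

variable {K : Type*} [Field K] {n : ℕ}

lemma master_op (q : K) (hq : q ≠ 0) (p r : Fin n × Fin n) (hpr : idxLt p r)
    (v : Vsp K n) : MS q p r v := by
  apply MS_vec (N := v.support.sup Lam0) v (fun β hβ => Finset.le_sup hβ)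
  intro β _
  exact master_single q hq (Lam0 β) β le_rfl p r hpr

/-- the straightening representation of `M_q(n)` on `Vsp` -/
def rep (q : K) (hq : q ≠ 0) :
    QuantumMatrix K q n →ₐ[K] Module.End K (Vsp K n) :=
  RingQuot.liftAlgHom K ⟨FreeAlgebra.lift K (fun x => (Top q x : Module.End K (Vsp K n))), by
    intro a b h
    induction h with
    | r1 i j k h =>
      simp only [map_mul, map_smul, freeGen, FreeAlgebra.lift_ι_apply]
      apply LinearMap.ext; intro v
      have hm := master_op q hq (i, j) (i, k) (Or.inr ⟨rfl, h⟩) v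
      rw [MS] at hm
      rw [cc_eq_q_row (p := (i, j)) (r := (i, k)) rfl, dd_eq_zero (p := (i, j)) (r := (i, k)) (fun hc => lt_irrefl _ hc.1), zero_smul, add_zero] at hm
      simpa only [Module.End.mul_apply, LinearMap.smul_apply] using hm
    | r2 i j k h =>
      simp only [map_mul, map_smul, freeGen, FreeAlgebra.lift_ι_apply]
      apply LinearMap.ext; intro v
      have hm := master_op q hq (i, j) (k, j) (Or.inl h) v
      rw [MS] at hm
      rw [cc_eq_q_col (p := (i, j)) (r := (k, j)) rfl, dd_eq_zero (p := (i, j)) (r := (k, j)) (fun hc => lt_irrefl _ hc.2), zero_smul, add_zero] at hm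
      simpa only [Module.End.mul_apply, LinearMap.smul_apply] using hm
    | r3 i j s t h1 h2 =>
      simp only [map_mul, freeGen, FreeAlgebra.lift_ι_apply]
      apply LinearMap.ext; intro v
      have hm := master_op q hq (i, j) (s, t) (Or.inl h1) v
      rw [MS] at hm
      rw [cc_eq_one (ne_of_lt h1) (ne_of_gt h2), one_smul,
        dd_eq_zero (p := (i, j)) (r := (s, t)) (fun hc => lt_asymm h2 hc.2), zero_smul, add_zero] at hm
      simpa only [Module.End.mul_apply] using hm
    | r4 i j s t h1 h2 =>
      simp only [map_mul, map_add, map_smul, freeGen, FreeAlgebra.lift_ι_apply]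
      apply LinearMap.ext; intro v
      have hm := master_op q hq (i, j) (s, t) (Or.inl h1) v
      rw [MS] at hm
      rw [cc_eq_one (ne_of_lt h1) (ne_of_lt h2), one_smul, dd_eq h1 h2] at hm
      simp only [cr1, cr2] at hm
      simpa only [Module.End.mul_apply, LinearMap.add_apply, LinearMap.smul_apply] using hm⟩

lemma rep_Zgen (q : K) (hq : q ≠ 0) (i j : Fin n) :
    rep q hq (Zgen K q n i j) = (Top q (i, j) : Module.End K (Vsp K n)) := by
  rw [Zgen, rep, RingQuot.liftAlgHom_mkAlgHom_apply, freeGen, FreeAlgebra.lift_ι_apply]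

end QMPBW
namespace QMPBW

variable {K : Type*} [Field K] {n : ℕ}

def bigL (n : ℕ) : List (Fin n × Fin n) :=
  (List.finRange n).reverse.flatMap fun i => (List.finRange n).reverse.map fun j => (i, j)

lemma zmon_eq_prod (q : K) (α : Fin n × Fin n → ℕ) :
    zmon K q α = ((bigL n).map fun x => Zgen K q n x.1 x.2 ^ α x).prod := by
  unfold zmon bigL
  rw [List.map_flatMap]
  simp only [List.map_map]
  rfl

lemma bigL_mem (p : Fin n × Fin n) : p ∈ bigL n := by
  unfold bigL
  rw [List.mem_flatMap]
  refine ⟨p.1, by simp, ?_⟩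
  rw [List.mem_map]
  exact ⟨p.2, by simp, rfl⟩

lemma bigL_sorted : (bigL n).Pairwise (fun a b => idxLt b a) := by
  unfold bigL
  rw [List.pairwise_flatMap]
  constructor
  · intro i _
    rw [List.pairwise_map, List.pairwise_reverse]
    apply List.Pairwise.imp ?_ (List.pairwise_lt_finRange n)
    intro a b h
    exact Or.inr ⟨rfl, h⟩
  · rw [List.pairwise_reverse]
    apply List.Pairwise.imp ?_ (List.pairwise_lt_finRange n)
    intro a b h x hx y hy
    rw [List.mem_map] at hx hy
    obtain ⟨ja, -, rfl⟩ := hx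
    obtain ⟨jb, -, rfl⟩ := hy
    exact Or.inl h

lemma Z2 (q : K) {p : Fin n × Fin n} {β : Fin n × Fin n → ℕ} (hb : bnd p β) :
    zmon K q (β + de p) = Zgen K q n p.1 p.2 * zmon K q β := by
  obtain ⟨L1, L2, hsplit⟩ := List.append_of_mem (bigL_mem p)
  have hsort := bigL_sorted (n := n)
  rw [hsplit] at hsort
  have hL1 : ∀ x ∈ L1, idxLt p x := by
    intro x hx
    exact (List.pairwise_append.1 hsort).2.2 x hx p List.mem_cons_self
  have hL2 : ∀ x ∈ L2, x ≠ p := by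
    intro x hx he
    have h2 := (List.pairwise_append.1 hsort).2.1
    rw [List.pairwise_cons] at h2
    exact (idxLt_irrefl p) (he ▸ h2.1 x hx)
  rw [zmon_eq_prod, zmon_eq_prod, hsplit]
  rw [List.map_append, List.map_append, List.prod_append, List.prod_append]
  have h1 : ∀ g : Fin n × Fin n → ℕ, (∀ x ∈ L1, g x = 0) →
      (L1.map fun x => Zgen K q n x.1 x.2 ^ g x).prod = 1 := by
    intro g hg
    apply List.prod_eq_one
    intro y hy
    rw [List.mem_map] at hy
    obtain ⟨x, hx, rfl⟩ := hy
    rw [hg x hx, pow_zero]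
  have hz1 : ∀ x ∈ L1, (β + de p) x = 0 := by
    intro x hx
    have hlt := hL1 x hx
    have h0 : β x = 0 := by
      by_contra h0
      exact hb x h0 hlt
    have hxp : x ≠ p := fun he => (idxLt_irrefl p) (he ▸ hlt)
    simp [h0, de_ne hxp]
  have hz2 : ∀ x ∈ L1, β x = 0 := by
    intro x hx
    by_contra h0
    exact hb x h0 (hL1 x hx)
  rw [h1 _ hz1, h1 _ hz2, one_mul, one_mul]
  rw [List.map_cons, List.map_cons, List.prod_cons, List.prod_cons]
  have hrest : (L2.map fun x => Zgen K q n x.1 x.2 ^ (β + de p) x).prod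
      = (L2.map fun x => Zgen K q n x.1 x.2 ^ β x).prod := by
    congr 1
    apply List.map_congr_left
    intro x hx
    have : (β + de p) x = β x := by simp [de_ne (hL2 x hx)]
    rw [this]
  rw [hrest]
  have hpp : (β + de p) p = β p + 1 := by simp [de_self]
  rw [hpp, pow_succ', mul_assoc]

lemma zmon_zero (q : K) : zmon K q (0 : Fin n × Fin n → ℕ) = 1 := by
  rw [zmon_eq_prod]
  apply List.prod_eq_one
  intro y hy
  rw [List.mem_map] at hy
  obtain ⟨x, -, rfl⟩ := hy
  exact pow_zero _

end QMPBW
namespace QMPBW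

variable {K : Type*} [Field K] {n : ℕ}

def Psi (q : K) : Vsp K n →ₗ[K] QuantumMatrix K q n :=
  Finsupp.linearCombination K (zmon K q)

lemma Psi_single (q : K) (α : Fin n × Fin n → ℕ) (c : K) :
    Psi q (Finsupp.single α c) = c • zmon K q α :=
  Finsupp.linearCombination_single K c α

lemma mul_Psi_sum (q : K) (z : QuantumMatrix K q n) (v : Vsp K n) :
    z * Psi q v = v.sum fun β c => c • (z * zmon K q β) := by
  rw [Psi, Finsupp.linearCombination_apply, Finsupp.mul_sum]
  apply Finsupp.sum_congr
  intro β _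
  rw [mul_smul_comm]

lemma Psi_Top (q : K) (x : Fin n × Fin n) (v : Vsp K n) :
    Psi q (Top q x v) = v.sum fun β c => c • Psi q (TT q x β) := by
  rw [Top_apply, map_finsuppSum]
  apply Finsupp.sum_congr
  intro β _
  rw [map_smul]

lemma Zg_mul_Psi_shift (q : K) {m : Fin n × Fin n} {v : Vsp K n}
    (hv : ∀ β ∈ v.support, bnd m β) :
    Zgen K q n m.1 m.2 * Psi q v = Psi q (Sh m v) := by
  rw [mul_Psi_sum, Sh_apply]
  rw [show (Finsupp.mapDomain (· + de m) v : Vsp K n)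
      = v.sum fun β c => Finsupp.single (β + de m) c from rfl]
  rw [map_finsuppSum]
  apply Finsupp.sum_congr
  intro β hβ
  rw [Psi_single, ← Z2 q (hv β hβ)]

/-- the defining relations, in `M_q(n)` -/
lemma Zrel (q : K) (p r : Fin n × Fin n) (h : idxLt p r) :
    Zgen K q n p.1 p.2 * Zgen K q n r.1 r.2 =
      cc q p r • (Zgen K q n r.1 r.2 * Zgen K q n p.1 p.2) +
        dd q p r • (Zgen K q n (cr1 p r).1 (cr1 p r).2 *
          Zgen K q n (cr2 p r).1 (cr2 p r).2) := by
  have hmk : ∀ a b, QMRel K q n a b →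
      RingQuot.mkAlgHom K (QMRel K q n) a = RingQuot.mkAlgHom K (QMRel K q n) b :=
    fun a b hr => RingQuot.mkAlgHom_rel K hr
  rcases h with h1 | ⟨h1, h2⟩
  · rcases lt_trichotomy p.2 r.2 with h2 | h2 | h2
    · have hh := hmk _ _ (QMRel.r4 p.1 p.2 r.1 r.2 h1 h2)
      simp only [map_mul, map_add, map_smul] at hh
      rw [cc_eq_one (ne_of_lt h1) (ne_of_lt h2), one_smul, dd_eq h1 h2]
      exact hh
    · have hh := hmk _ _ (QMRel.r2 p.1 p.2 r.1 h1)
      simp only [map_mul, map_smul] at hh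
      rw [cc_eq_q_col h2,
        dd_eq_zero (p := p) (r := r) (fun hc => absurd hc.2 (h2 ▸ lt_irrefl _)),
        zero_smul, add_zero, ← h2]
      exact hh
    · have hh := hmk _ _ (QMRel.r3 p.1 p.2 r.1 r.2 h1 h2)
      simp only [map_mul] at hh
      rw [cc_eq_one (ne_of_lt h1) (ne_of_gt h2), one_smul,
        dd_eq_zero (p := p) (r := r) (fun hc => lt_asymm h2 hc.2), zero_smul, add_zero]
      exact hh
  · have hh := hmk _ _ (QMRel.r1 p.1 p.2 r.2 h2)
    simp only [map_mul, map_smul] at hh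
    rw [cc_eq_q_row h1,
      dd_eq_zero (p := p) (r := r) (fun hc => absurd hc.1 (h1 ▸ lt_irrefl _)),
      zero_smul, add_zero, ← h1]
    exact hh

set_option maxHeartbeats 1000000 in
lemma intertwine (q : K) (hq : q ≠ 0) :
    ∀ (N : ℕ) (p : Fin n × Fin n) (α : Fin n × Fin n → ℕ), Lam p α ≤ N →
      Zgen K q n p.1 p.2 * zmon K q α = Psi q (Top q p (Finsupp.single α 1)) := by
  intro N
  induction N using Nat.strong_induction_on with
  | _ N ih =>
  intro p α hN
  have hwp := w_pos p
  have hN1 : 1 ≤ N := le_trans (by unfold Lam; omega) hN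
  have ihv : ∀ (x : Fin n × Fin n) (v : Vsp K n), (∀ β ∈ v.support, Lam x β ≤ N - 1) →
      Zgen K q n x.1 x.2 * Psi q v = Psi q (Top q x v) := by
    intro x v hv
    rw [mul_Psi_sum, Psi_Top]
    apply Finsupp.sum_congr
    intro β hβ
    have hxb := ih (N - 1) (by omega) x β (hv β hβ)
    rw [Top_single_one] at hxb
    rw [hxb]
  by_cases hb : bnd p α
  · rw [Top_single_one, U1 q hb, Psi_single, one_smul, Z2 q hb]
  · have hne := msupp_nonempty_of_not_bnd hb
    set m := mx α hne with hmdef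
    have hm0 : α m ≠ 0 := mx_mem α hne
    have hbm : bnd m α := bnd_mx α hne
    have hpm : idxLt p m := idxLt_mx hb hne
    have hwm := w_pos m
    have hsub : Lam0 (α - de m) + w m = Lam0 α := Lam0_sub_de hm0
    have hα : α = (α - de m) + de m := (sub_de_add_de hm0).symm
    have hz : zmon K q α = Zgen K q n m.1 m.2 * zmon K q (α - de m) := by
      conv_lhs => rw [hα]
      exact Z2 q (bnd_sub hbm)
    have hps : Zgen K q n p.1 p.2 * zmon K q (α - de m)
        = Psi q (Top q p (Finsupp.single (α - de m) 1)) := by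
      apply ih (N - 1) (by omega) p (α - de m)
      unfold Lam at hN ⊢; omega
    have hbndTop : ∀ β ∈ (Top q p (Finsupp.single (α - de m) 1)).support, bnd m β := by
      apply Top_letters q ?_ (idxLt_asymm hpm)
      intro γ hγ
      have h1 := Finsupp.support_single_subset hγ
      rw [Finset.mem_singleton] at h1; subst h1
      exact bnd_sub hbm
    -- left-hand side computation
    have lhs_eq : Zgen K q n p.1 p.2 * zmon K q α =
        cc q p m • Psi q (Sh m (Top q p (Finsupp.single (α - de m) 1))) +
        dd q p m • (Zgen K q n (cr1 p m).1 (cr1 p m).2 *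
          (Zgen K q n (cr2 p m).1 (cr2 p m).2 * zmon K q (α - de m))) := by
      rw [hz, ← mul_assoc, Zrel q p m hpm, add_mul, smul_mul_assoc, smul_mul_assoc,
        mul_assoc, mul_assoc, hps, Zg_mul_Psi_shift q hbndTop]
    rw [lhs_eq]
    -- right-hand side computation
    rw [Top_single_one q p α, U2 q hb hne, ← hmdef, map_add, map_smul, map_smul]
    rw [show Finsupp.mapDomain (· + de m) (TT q p (α - de m))
        = Sh m (Top q p (Finsupp.single (α - de m) 1)) from by
      rw [Top_single_one q p (α - de m), Sh_apply]]
    congr 1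
    by_cases hd : dd q p m = 0
    · rw [hd, zero_smul, zero_smul]
    · have hR4 : p.1 < m.1 ∧ p.2 < m.2 := by
        rcases dd_cases q p m with h' | h'
        · exact absurd h' hd
        · exact h'
      have hw := w_cr_lt hR4
      congr 1
      have hc2 : Zgen K q n (cr2 p m).1 (cr2 p m).2 * zmon K q (α - de m)
          = Psi q (Top q (cr2 p m) (Finsupp.single (α - de m) 1)) := by
        apply ih (N - 1) (by omega) (cr2 p m) (α - de m)
        have h1 := w_lt_w (cr2_lt hR4)
        unfold Lam at hN ⊢; omega
      rw [hc2]
      have hc1 : Zgen K q n (cr1 p m).1 (cr1 p m).2 *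
          Psi q (Top q (cr2 p m) (Finsupp.single (α - de m) 1))
          = Psi q (Top q (cr1 p m) (Top q (cr2 p m) (Finsupp.single (α - de m) 1))) := by
        apply ihv
        intro β hβ
        have h1 : ∀ γ ∈ (Finsupp.single (α - de m) (1:K)).support, Lam0 γ ≤ Lam0 (α - de m) := by
          intro γ hγ
          have h2 := Finsupp.support_single_subset hγ
          rw [Finset.mem_singleton] at h2; subst h2
          exact le_rfl
        have h2 := Top_weight q h1 β hβ
        unfold Lam at hN ⊢; omega
      rw [hc1, ← Top_single_one q (cr2 p m) (α - de m)]

lemma intertwine_op (q : K) (hq : q ≠ 0) (x : Fin n × Fin n) (v : Vsp K n) :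
    Zgen K q n x.1 x.2 * Psi q v = Psi q (Top q x v) := by
  rw [mul_Psi_sum, Psi_Top]
  apply Finsupp.sum_congr
  intro β _
  have h := intertwine q hq (Lam x β) x β le_rfl
  rw [Top_single_one] at h
  rw [h]

/-- evaluation at the vacuum vector -/
def Ev (q : K) (hq : q ≠ 0) : QuantumMatrix K q n →ₗ[K] Vsp K n where
  toFun := fun f => rep q hq f (Finsupp.single 0 1)
  map_add' := by
    intro a b
    show rep q hq (a + b) (Finsupp.single 0 1) = _
    rw [map_add]; rfl
  map_smul' := by
    intro c a
    show rep q hq (c • a) (Finsupp.single 0 1) = c • rep q hq a (Finsupp.single 0 1)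
    rw [map_smul]; rfl

lemma Ev_zmon (q : K) (hq : q ≠ 0) (γ : Fin n × Fin n → ℕ) :
    Ev q hq (zmon K q γ) = Finsupp.single γ 1 := by
  suffices h : ∀ (M : ℕ) (γ : Fin n × Fin n → ℕ), Lam0 γ ≤ M →
      Ev q hq (zmon K q γ) = Finsupp.single γ 1 from h (Lam0 γ) γ le_rfl
  intro M
  induction M with
  | zero =>
    intro γ hγ
    have hγ0 : γ = 0 := by
      funext x
      by_contra h0
      have h1 : 0 < γ x * w x := Nat.mul_pos (Nat.pos_of_ne_zero h0) (w_pos x)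
      have h2 : γ x * w x ≤ Lam0 γ := by
        unfold Lam0
        exact Finset.single_le_sum (f := fun s => γ s * w s)
          (fun s _ => Nat.zero_le _) (Finset.mem_univ x)
      omega
    subst hγ0
    rw [zmon_zero, show Ev q hq 1 = Finsupp.single 0 1 from by
      show rep q hq 1 (Finsupp.single 0 1) = Finsupp.single 0 1
      rw [map_one]; rfl]
  | succ M ihM =>
    intro γ hγ
    by_cases hsupp : (msupp γ).Nonempty
    · set m := mx γ hsupp with hmdef
      have hm0 : γ m ≠ 0 := mx_mem γ hsupp
      have hbm : bnd m γ := bnd_mx γ hsupp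
      have hwm := w_pos m
      have hsub : Lam0 (γ - de m) + w m = Lam0 γ := Lam0_sub_de hm0
      have hγeq : γ = (γ - de m) + de m := (sub_de_add_de hm0).symm
      have hz : zmon K q γ = Zgen K q n m.1 m.2 * zmon K q (γ - de m) := by
        conv_lhs => rw [hγeq]
        exact Z2 q (bnd_sub hbm)
      show rep q hq (zmon K q γ) (Finsupp.single 0 1) = Finsupp.single γ 1
      rw [hz, map_mul, Module.End.mul_apply, rep_Zgen]
      rw [show rep q hq (zmon K q (γ - de m)) (Finsupp.single 0 1)
          = Finsupp.single (γ - de m) 1 from ihM (γ - de m) (by omega)]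
      rw [Top_single_one, U1 q (bnd_sub hbm), ← hγeq]
    · have hγ0 : γ = 0 := by
        funext x
        by_contra h0
        exact hsupp ⟨x, mem_msupp.2 h0⟩
      subst hγ0
      rw [zmon_zero]
      show rep q hq 1 (Finsupp.single 0 1) = Finsupp.single 0 1
      rw [map_one]; rfl

end QMPBW

set_option maxHeartbeats 1000000 in
/-- For `n ≥ 2` and `q ≠ 0`, the ordered monomials
`{z^α : α ∈ ℕ^{I(n)}}` form a `K`-basis of `M_q(n)`: they are `K`-linearly
independent and span `M_q(n)` as a `K`-vector space. -/
theorem quantumMatrix_pbw_basis (K : Type*) [Field K] [CharZero K]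
    (q : K) (hq : q ≠ 0) (n : ℕ) (hn : 2 ≤ n) :
    LinearIndependent K (zmon K q (n := n)) ∧
    Submodule.span K (Set.range (zmon K q (n := n))) = ⊤ := by
  constructor
  · rw [linearIndependent_iff]
    intro l hl
    have h1 : QMPBW.Ev q hq (Finsupp.linearCombination K (zmon K q) l) = l := by
      rw [Finsupp.linearCombination_apply, map_finsuppSum]
      have h2 : (l.sum fun α c => QMPBW.Ev q hq (c • zmon K q α))
          = l.sum fun α c => Finsupp.single α c := by
        apply Finsupp.sum_congr
        intro α _
        rw [map_smul, QMPBW.Ev_zmon, Finsupp.smul_single', mul_one]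
      rw [h2, Finsupp.sum_single]
    rw [hl, map_zero] at h1
    exact h1.symm
  · have hr : Submodule.span K (Set.range (zmon K q (n := n)))
        = LinearMap.range (QMPBW.Psi q) := by
      rw [QMPBW.Psi, Finsupp.range_linearCombination]
    rw [hr, eq_top_iff]
    rintro z -
    have hadjtop : Algebra.adjoin K
        (Set.range fun x : Fin n × Fin n => Zgen K q n x.1 x.2) = ⊤ := by
      have himg : (Set.range fun x : Fin n × Fin n => Zgen K q n x.1 x.2)
          = (RingQuot.mkAlgHom K (QMRel K q n)) ''
              (Set.range (FreeAlgebra.ι K (X := Fin n × Fin n))) := by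
        rw [← Set.range_comp]
        rfl
      rw [himg, ← AlgHom.map_adjoin, FreeAlgebra.adjoin_range_ι, Algebra.map_top]
      exact (AlgHom.range_eq_top _).2 (RingQuot.mkAlgHom_surjective K _)
    have hz : z ∈ Algebra.adjoin K
        (Set.range fun x : Fin n × Fin n => Zgen K q n x.1 x.2) := by
      rw [hadjtop]; trivial
    have key : ∀ v : QMPBW.Vsp K n,
        z * QMPBW.Psi q v ∈ LinearMap.range (QMPBW.Psi q) := by
      induction hz using Algebra.adjoin_induction with
      | mem x hx =>
        obtain ⟨x0, rfl⟩ := hx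
        intro v
        rw [QMPBW.intertwine_op q hq]
        exact ⟨_, rfl⟩
      | algebraMap r =>
        intro v
        rw [Algebra.algebraMap_eq_smul_one, smul_mul_assoc, one_mul]
        exact ⟨r • v, map_smul _ _ _⟩
      | add x y hx hy ihx ihy =>
        intro v
        rw [add_mul]
        exact Submodule.add_mem _ (ihx v) (ihy v)
      | mul x y hx hy ihx ihy =>
        intro v
        obtain ⟨v', hv'⟩ := ihy v
        rw [mul_assoc, ← hv']
        exact ihx v'
    have h1 := key (Finsupp.single 0 1)
    rw [show QMPBW.Psi q (Finsupp.single (0 : Fin n × Fin n → ℕ) (1 : K)) = 1 from by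
      rw [QMPBW.Psi_single, one_smul, QMPBW.zmon_zero], mul_one] at h1
    exact h1
end
end

section
/- Let M_q(n) be the standard quantized matrix algebra over K with n ≥ 2 and q ≠ 0, and assume the ordered monomials {z^α : α ∈ ℕ^{I(n)}} form a K-basis of M_q(n). For all generators z_{ij}, z_{st}, z_{pq} with z_{st} ≺ z_{pq} in the generator order (i.e., (s,t) < (p,q) in I(n)), the leading exponents satisfy LE(z_{ij} z_{st}) ≺ LE(z_{ij} z_{pq}) and LE(z_{st} z_{ij}) ≺ LE(z_{pq} z_{ij}). -/
section AuxProof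

variable {n : ℕ}

lemma idxLt_irrefl (p : Fin n × Fin n) : ¬ idxLt p p := by
  simp [idxLt]

lemma idxLt_trans {a b c : Fin n × Fin n} (h1 : idxLt a b) (h2 : idxLt b c) :
    idxLt a c := by
  rcases h1 with h | ⟨e, h⟩ <;> rcases h2 with h' | ⟨e', h'⟩ <;>
    simp only [idxLt] <;>
    first
      | exact Or.inl (h.trans h')
      | exact Or.inl (e' ▸ h)
      | exact Or.inl (e ▸ h')
      | exact Or.inr ⟨e.trans e', h.trans h'⟩

lemma idxLt_asymm {a b : Fin n × Fin n} (h : idxLt a b) : ¬ idxLt b a :=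
  fun h' => idxLt_irrefl a (idxLt_trans h h')

lemma idxLt_tri (a b : Fin n × Fin n) : idxLt a b ∨ a = b ∨ idxLt b a := by
  rcases lt_trichotomy a.1 b.1 with h | h | h
  · exact Or.inl (Or.inl h)
  · rcases lt_trichotomy a.2 b.2 with h2 | h2 | h2
    · exact Or.inl (Or.inr ⟨h, h2⟩)
    · exact Or.inr (Or.inl (Prod.ext h h2))
    · exact Or.inr (Or.inr (Or.inr ⟨h.symm, h2⟩))
  · exact Or.inr (Or.inr (Or.inl h))

lemma idxLt_ne {a b : Fin n × Fin n} (h : idxLt a b) : a ≠ b :=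
  fun e => idxLt_irrefl a (e ▸ h)

lemma expLt_irrefl (α : Fin n × Fin n → ℕ) : ¬ expLt α α := by
  rintro ⟨p, hp, -⟩; exact lt_irrefl _ hp

lemma expLt_asymm {α β : Fin n × Fin n → ℕ} (h : expLt α β) : ¬ expLt β α := by
  rintro ⟨p2, hp2, hr2⟩
  obtain ⟨p1, hp1, hr1⟩ := h
  rcases idxLt_tri p1 p2 with hlt | rfl | hlt
  · rw [hr1 p2 hlt] at hp2; exact lt_irrefl _ hp2
  · omega
  · rw [hr2 p1 hlt] at hp1; exact lt_irrefl _ hp1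

lemma expLt_add_left {α β : Fin n × Fin n → ℕ} (γ : Fin n × Fin n → ℕ)
    (h : expLt α β) : expLt (γ + α) (γ + β) := by
  obtain ⟨p, hp, hr⟩ := h
  exact ⟨p, by simpa using hp, fun r hr' => by simp [hr r hr']⟩

lemma expLt_add_right {α β : Fin n × Fin n → ℕ} (γ : Fin n × Fin n → ℕ)
    (h : expLt α β) : expLt (α + γ) (β + γ) := by
  obtain ⟨p, hp, hr⟩ := h
  exact ⟨p, by simpa using hp, fun r hr' => by simp [hr r hr']⟩

lemma expLt_eps {s t p r : Fin n} (h : idxLt (s, t) (p, r)) :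
    expLt (eps s t) (eps p r) := by
  have hne : (p, r) ≠ ((s, t) : Fin n × Fin n) := (idxLt_ne h).symm
  refine ⟨(p, r), ?_, fun x hx => ?_⟩
  · simp [eps, hne]
  · have h1 : x ≠ (s, t) := fun e => idxLt_asymm hx (e ▸ h)
    have h2 : x ≠ (p, r) := fun e => idxLt_irrefl _ (e ▸ hx)
    simp [eps, h1, h2]

-- list lemmas
lemma sublist_of_pairwise {ι : Type*} {G : ι → ι → Prop}
    (hG : ∀ a b, G a b → ¬ G b a) :
    ∀ {l : List ι}, l.Pairwise G → ∀ {a b : ι}, a ∈ l → b ∈ l → G a b →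
      [a, b].Sublist l := by
  intro l
  induction l with
  | nil => intro _ a b ha; simp at ha
  | cons x xs ih =>
    intro hl a b ha hb hab
    obtain ⟨hx, hxs⟩ := List.pairwise_cons.mp hl
    rcases List.mem_cons.mp ha with rfl | ha'
    · have hb' : b ∈ xs := by
        rcases List.mem_cons.mp hb with rfl | hh
        · exact absurd hab (hG _ _ hab)
        · exact hh
      exact (List.singleton_sublist.mpr hb').cons₂ a
    · have hb' : b ∈ xs := by
        rcases List.mem_cons.mp hb with rfl | hh
        · exact absurd (hx a ha') (hG a b hab)
        · exact hh
      exact (ih hxs ha' hb' hab).cons x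

lemma prod_map_pow_single {ι M : Type*} [Monoid M] [DecidableEq ι] (f : ι → M) :
    ∀ (l : List ι), l.Nodup → ∀ a, a ∈ l → ∀ k : ℕ,
      (l.map fun p => f p ^ (if p = a then k else 0)).prod = f a ^ k := by
  intro l
  induction l with
  | nil => intro _ a ha; simp at ha
  | cons x xs ih =>
    intro hl a ha k
    obtain ⟨hx, hxs⟩ := List.nodup_cons.mp hl
    rcases List.mem_cons.mp ha with rfl | ha'
    · have : ∀ p ∈ xs, f p ^ (if p = a then k else 0) = f p ^ (0 : ℕ) := by
        intro p hp
        have : p ≠ a := fun e => hx (e ▸ hp)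
        simp [this]
      rw [List.map_cons, List.prod_cons, if_pos rfl, List.map_congr_left this]
      simp
    · have hxa : x ≠ a := fun e => hx (e ▸ ha')
      rw [List.map_cons, List.prod_cons, if_neg hxa, pow_zero, one_mul,
        ih hxs a ha' k]

lemma prod_map_pow_pair {ι M : Type*} [Monoid M] [DecidableEq ι] (f : ι → M) :
    ∀ (l : List ι), l.Nodup → ∀ a b : ι, [a, b].Sublist l → ∀ k m : ℕ,
      (l.map fun p =>
          f p ^ ((if p = a then k else 0) + (if p = b then m else 0))).prod
        = f a ^ k * f b ^ m := by
  intro l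
  induction l with
  | nil => intro _ a b hs; simp at hs
  | cons x xs ih =>
    intro hl a b hs k m
    obtain ⟨hx, hxs⟩ := List.nodup_cons.mp hl
    cases hs with
    | cons _ hs' =>
      have ha : a ∈ xs := hs'.subset (by simp)
      have hb : b ∈ xs := hs'.subset (by simp)
      have hxa : x ≠ a := fun e => hx (e ▸ ha)
      have hxb : x ≠ b := fun e => hx (e ▸ hb)
      rw [List.map_cons, List.prod_cons, if_neg hxa, if_neg hxb, pow_zero,
        one_mul, ih hxs a b hs' k m]
    | cons_cons _ hs' =>
      -- a = x, [b] <+ xs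
      have hb : b ∈ xs := List.singleton_sublist.mp hs'
      have hxb : x ≠ b := fun e => hx (e ▸ hb)
      have hmap : ∀ p ∈ xs, f p ^ ((if p = x then k else 0) + (if p = b then m else 0))
          = f p ^ (if p = b then m else 0) := by
        intro p hp
        have : p ≠ x := fun e => hx (e ▸ hp)
        simp [this]
      rw [List.map_cons, List.prod_cons, if_pos rfl, if_neg hxb, add_zero,
        List.map_congr_left hmap, prod_map_pow_single f xs hxs b hb m]

end AuxProof

section ZmonProof

variable {K : Type*} [Field K] {q : K} {n : ℕ}

/-- The list of all indices in decreasing order. -/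
def pairsList (n : ℕ) : List (Fin n × Fin n) :=
  (List.finRange n).reverse.flatMap fun i =>
    (List.finRange n).reverse.map fun j => (i, j)

lemma zmon_eq_prod (α : Fin n × Fin n → ℕ) :
    zmon K q α = ((pairsList n).map fun p => Zgen K q n p.1 p.2 ^ α p).prod := by
  rw [zmon, pairsList, List.map_flatMap]
  have : (fun i => List.map (fun j => Zgen K q n i j ^ α (i, j)) (List.finRange n).reverse)
      = fun a => List.map (fun p : Fin n × Fin n => Zgen K q n p.1 p.2 ^ α p)
          (List.map (fun j => (a, j)) (List.finRange n).reverse) := by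
    funext i
    rw [List.map_map]
    rfl
  rw [this]

lemma pairsList_pairwise : (pairsList n).Pairwise (fun a b => idxLt b a) := by
  rw [pairsList, List.pairwise_flatMap]
  constructor
  · intro i _
    rw [List.pairwise_map, List.pairwise_reverse]
    exact (List.pairwise_lt_finRange n).imp fun h => Or.inr ⟨rfl, h⟩
  · rw [List.pairwise_reverse]
    refine (List.pairwise_lt_finRange n).imp ?_
    intro a b hab x hx y hy
    simp only [List.mem_map] at hx hy
    obtain ⟨jx, -, rfl⟩ := hx
    obtain ⟨jy, -, rfl⟩ := hy
    exact Or.inl hab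

lemma pairsList_nodup : (pairsList n).Nodup :=
  pairsList_pairwise.imp fun h => idxLt_ne h |>.symm

lemma mem_pairsList (a : Fin n × Fin n) : a ∈ pairsList n := by
  rw [pairsList, List.mem_flatMap]
  exact ⟨a.1, by simp, by simp [List.mem_map]⟩

lemma zmon_pair {a c : Fin n × Fin n} (h : idxLt c a) :
    zmon K q (eps a.1 a.2 + eps c.1 c.2) = Zgen K q n a.1 a.2 * Zgen K q n c.1 c.2 := by
  rw [zmon_eq_prod]
  have := prod_map_pow_pair (fun p : Fin n × Fin n => Zgen K q n p.1 p.2)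
    (pairsList n) pairsList_nodup a c
    (sublist_of_pairwise (fun _ _ h => idxLt_asymm h) pairsList_pairwise
      (mem_pairsList a) (mem_pairsList c) h) 1 1
  simp only [pow_one] at this
  rw [← this]
  congr 1

lemma zmon_sq (a : Fin n × Fin n) :
    zmon K q (eps a.1 a.2 + eps a.1 a.2) = Zgen K q n a.1 a.2 * Zgen K q n a.1 a.2 := by
  rw [zmon_eq_prod]
  have := prod_map_pow_single (fun p : Fin n × Fin n => Zgen K q n p.1 p.2)
    (pairsList n) pairsList_nodup a (mem_pairsList a) 2
  rw [pow_two] at this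
  rw [← this]
  congr 1
  apply List.map_congr_left
  intro p _
  have : (eps a.1 a.2 + eps a.1 a.2) p = (if p = a then 2 else 0) := by
    simp only [eps, Pi.add_apply, Prod.mk.eta]
    split <;> rfl
  rw [this]

end ZmonProof

section MainProof

variable {K : Type*} [Field K] {q : K} {n : ℕ}

lemma Zgen_mul_eq (i j s t : Fin n) :
    Zgen K q n i j * Zgen K q n s t
      = RingQuot.mkAlgHom K (QMRel K q n) (freeGen K n i j * freeGen K n s t) :=
  (map_mul _ _ _).symm

lemma expLt_zero_pair {a c : Fin n × Fin n} (hca : idxLt c a ∨ c = a) :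
    expLt 0 (eps a.1 a.2 + eps c.1 c.2) := by
  refine ⟨a, ?_, fun x hx => ?_⟩
  · have h1 : eps a.1 a.2 a = 1 := if_pos rfl
    simp only [Pi.zero_apply, Pi.add_apply, h1]
    omega
  · have hxa : x ≠ a := fun e => idxLt_irrefl _ (e ▸ hx)
    have hxc : x ≠ c := by
      rintro rfl
      rcases hca with h' | rfl
      · exact idxLt_irrefl _ (idxLt_trans h' hx)
      · exact idxLt_irrefl _ hx
    simp [eps, hxa, hxc]

lemma expLt_R4 {i j s t : Fin n} (his : i < s) (hjt : j < t) :
    expLt (eps i t + eps s j) (eps i j + eps s t) := by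
  have hsi : s ≠ i := his.ne'
  have htj : t ≠ j := hjt.ne'
  refine ⟨(s, t), ?_, fun x hx => ?_⟩
  · have h1 : eps s t (s, t) = 1 := if_pos rfl
    have h2 : eps i t (s, t) = 0 := by simp [eps, Prod.ext_iff, hsi]
    have h3 : eps s j (s, t) = 0 := by simp [eps, Prod.ext_iff, htj]
    simp only [Pi.add_apply, h1, h2, h3]
    omega
  · have key : ∀ u : Fin n × Fin n, idxLt u (s, t) ∨ u = (s, t) → x ≠ u := by
      rintro u hu rfl
      rcases hu with h' | rfl
      · exact idxLt_irrefl _ (idxLt_trans h' hx)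
      · exact idxLt_irrefl _ hx
    have k1 := key (i, t) (Or.inl (Or.inl his))
    have k2 := key (s, j) (Or.inl (Or.inr ⟨rfl, hjt⟩))
    have k3 := key (i, j) (Or.inl (Or.inl his))
    have k4 := key (s, t) (Or.inr rfl)
    simp [eps, k1, k2, k3, k4]

lemma prod_expand (b : Module.Basis (Fin n × Fin n → ℕ) K (QuantumMatrix K q n))
    (hb : ∀ α, b α = zmon K q α) (hq : q ≠ 0) (i j s t : Fin n) :
    ∃ (c c' : K) (δ : Fin n × Fin n → ℕ),
      c ≠ 0 ∧ expLt δ (eps i j + eps s t) ∧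
      Zgen K q n i j * Zgen K q n s t = c • b (eps i j + eps s t) + c' • b δ := by
  rcases idxLt_tri ((i, j) : Fin n × Fin n) (s, t) with hlt | heq | hgt
  · -- (i,j) < (s,t) : must use a relation
    have hγ : b (eps i j + eps s t) = Zgen K q n s t * Zgen K q n i j := by
      rw [hb, add_comm (eps i j) (eps s t)]
      exact zmon_pair (a := (s, t)) (c := (i, j)) hlt
    rcases hlt with hrow | ⟨hre, hcol⟩
    · -- i < s
      have his : i < s := hrow
      rcases lt_trichotomy j t with hjt | rfl | htj
      · -- R4
        refine ⟨1, q - q⁻¹, eps i t + eps s j, one_ne_zero, expLt_R4 his hjt, ?_⟩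
        have hδ : b (eps i t + eps s j) = Zgen K q n i t * Zgen K q n s j := by
          rw [hb, add_comm (eps i t) (eps s j),
            zmon_pair (a := (s, j)) (c := (i, t)) (Or.inl his),
            Zgen_mul_eq, Zgen_mul_eq,
            RingQuot.mkAlgHom_rel K (QMRel.r3 i t s j his hjt)]
        rw [hγ, hδ, Zgen_mul_eq i j s t,
          RingQuot.mkAlgHom_rel K (QMRel.r4 i j s t his hjt), map_add, map_smul,
          map_mul, map_mul, one_smul]
        rfl
      · -- R2 : j = t
        refine ⟨q, 0, 0, hq, (by
          rw [add_comm (eps i j) (eps s j)]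
          exact expLt_zero_pair (a := (s, j)) (c := (i, j)) (Or.inl (Or.inl his))), ?_⟩
        rw [add_comm (eps i j) (eps s j)] at hγ ⊢
        rw [hγ, Zgen_mul_eq i j s j,
          RingQuot.mkAlgHom_rel K (QMRel.r2 i j s his), map_smul, map_mul]
        simp [Zgen]
      · -- R3 : t < j
        refine ⟨1, 0, 0, one_ne_zero, (by
          rw [add_comm (eps i j) (eps s t)]
          exact expLt_zero_pair (a := (s, t)) (c := (i, j)) (Or.inl (Or.inl his))), ?_⟩
        rw [add_comm (eps i j) (eps s t)] at hγ ⊢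
        rw [hγ, Zgen_mul_eq i j s t,
          RingQuot.mkAlgHom_rel K (QMRel.r3 i j s t his htj), map_mul]
        simp [Zgen]
    · -- i = s, j < t : R1
      have hre' : i = s := hre
      subst hre'
      refine ⟨q, 0, 0, hq, (by
        rw [add_comm (eps i j) (eps i t)]
        exact expLt_zero_pair (a := (i, t)) (c := (i, j)) (Or.inl (Or.inr ⟨rfl, hcol⟩))), ?_⟩
      rw [add_comm (eps i j) (eps i t)] at hγ ⊢
      rw [hγ, Zgen_mul_eq i j i t,
        RingQuot.mkAlgHom_rel K (QMRel.r1 i j t hcol), map_smul, map_mul]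
      simp [Zgen]
  · -- equal
    have hi : i = s := congrArg Prod.fst heq
    have hj : j = t := congrArg Prod.snd heq
    subst hi; subst hj
    refine ⟨1, 0, 0, one_ne_zero, expLt_zero_pair (a := (i, j)) (c := (i, j))
      (Or.inr rfl), ?_⟩
    rw [hb, zmon_sq (a := (i, j))]
    simp
  · -- (s,t) < (i,j) : already ordered
    refine ⟨1, 0, 0, one_ne_zero, expLt_zero_pair (a := (i, j)) (c := (s, t))
      (Or.inl hgt), ?_⟩
    rw [hb, zmon_pair (a := (i, j)) (c := (s, t)) hgt]
    simp

lemma lead_unique (b : Module.Basis (Fin n × Fin n → ℕ) K (QuantumMatrix K q n))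
    {f : QuantumMatrix K q n} {γ₀ δ₀ : Fin n × Fin n → ℕ} {c c' : K}
    (hc : c ≠ 0) (hδ : expLt δ₀ γ₀)
    (hf : f = c • b γ₀ + c' • b δ₀) {γ : Fin n × Fin n → ℕ}
    (h : IsLeadExp b f γ) : γ = γ₀ := by
  have hne : δ₀ ≠ γ₀ := fun e => expLt_irrefl _ (e ▸ hδ)
  have hrepr : b.repr f = c • Finsupp.single γ₀ 1 + c' • Finsupp.single δ₀ 1 := by
    rw [hf, map_add, map_smul, map_smul, Module.Basis.repr_self, Module.Basis.repr_self]
  obtain ⟨h1, h2⟩ := h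
  have hγ0 : b.repr f γ₀ = c := by
    rw [hrepr]
    simp [Finsupp.single_apply, hne]
  have hmem : γ = γ₀ ∨ γ = δ₀ := by
    by_contra hcon
    push_neg at hcon
    apply h1
    rw [hrepr]
    simp [Finsupp.single_apply, Ne.symm hcon.1, Ne.symm hcon.2]
  rcases hmem with rfl | rfl
  · rfl
  · exfalso
    rcases h2 γ₀ (by rw [hγ0]; exact hc) with he | hl
    · exact hne he.symm
    · exact expLt_asymm hδ hl

end MainProof

/-- for generators `z_{ij}, z_{st}, z_{pr}` with
`(s,t) < (p,r)`, the leading exponents satisfy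
`LE(z_{ij} z_{st}) ≺ LE(z_{ij} z_{pr})` and
`LE(z_{st} z_{ij}) ≺ LE(z_{pr} z_{ij})`. -/
theorem leadExp_gen_mono (K : Type*) [Field K] [CharZero K]
    (q : K) (hq : q ≠ 0) (n : ℕ) (hn : 2 ≤ n)
    (b : Module.Basis (Fin n × Fin n → ℕ) K (QuantumMatrix K q n))
    (hb : ∀ α, b α = zmon K q α)
    (i j s t p r : Fin n) (h : idxLt (s, t) (p, r)) :
    (∀ γ₁ γ₂, IsLeadExp b (Zgen K q n i j * Zgen K q n s t) γ₁ →
      IsLeadExp b (Zgen K q n i j * Zgen K q n p r) γ₂ → expLt γ₁ γ₂) ∧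
    (∀ γ₁ γ₂, IsLeadExp b (Zgen K q n s t * Zgen K q n i j) γ₁ →
      IsLeadExp b (Zgen K q n p r * Zgen K q n i j) γ₂ → expLt γ₁ γ₂) := by
  constructor
  · intro γ₁ γ₂ h1 h2
    obtain ⟨c1, c1', δ1, hc1, hδ1, hf1⟩ := prod_expand b hb hq i j s t
    obtain ⟨c2, c2', δ2, hc2, hδ2, hf2⟩ := prod_expand b hb hq i j p r
    rw [lead_unique b hc1 hδ1 hf1 h1, lead_unique b hc2 hδ2 hf2 h2]
    exact expLt_add_left (eps i j) (expLt_eps h)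
  · intro γ₁ γ₂ h1 h2
    obtain ⟨c1, c1', δ1, hc1, hδ1, hf1⟩ := prod_expand b hb hq s t i j
    obtain ⟨c2, c2', δ2, hc2, hδ2, hf2⟩ := prod_expand b hb hq p r i j
    rw [lead_unique b hc1 hδ1 hf1 h1, lead_unique b hc2 hδ2 hf2 h2]
    exact expLt_add_right (eps i j) (expLt_eps h)
end
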